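/- arXiv:1412.2180 — 4 statements merged into one kernel-verified Lean document; each statement's English description precedes it below -/
import Mathlib

section
/- Let < be a total order on 𝒜ₙ, and let a be an unbarred letter and b̄ a barred letter that are adjacent (consecutive) in <. Then in any colored tableau T with respect to <, the set of boxes of T containing a or b̄ forms a skew Young diagram (a set-difference μ∖κ of two Young diagrams κ ⊆ μ) that contains no 2×2 square of boxes, i.e., it is a ribbon. -/
open scoped Classical

/-- A letter of the alphabet 𝒜ₙ: `(false, i)` is the unbarred letter `i+1`,
`(true, i)` is the barred letter `i+1` with a bar. -/
abbrev Letter (n : ℕ) := Bool × Fin n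

/-- A filling assigns an optional letter to each box of the plane; boxes outside
the underlying shape carry `none`. -/
abbrev Filling (n : ℕ) := ℕ × ℕ → Option (Letter n)

/-- `r` is a total (linear) order on `Letter n` extending the partial order of 𝒜ₙ,
in which the unbarred letters form a chain, the barred letters form a chain, and
barred and unbarred letters are incomparable. -/
def IsLinExt {n : ℕ} (r : Letter n → Letter n → Prop) : Prop :=
  IsLinearOrder (Letter n) r ∧ ∀ (b : Bool) (i j : Fin n), i ≤ j → r (b, i) (b, j)

/-- `T` is a semistandard colored tableau of shape `sh` with respect to the total order `r`:
rows and columns weakly increase with respect to `r`, no two identical unbarred letters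
share a column, and no two identical barred letters share a row. -/
def IsColoredTableau {n : ℕ} (r : Letter n → Letter n → Prop) (sh : YoungDiagram)
    (T : Filling n) : Prop :=
  (∀ c, (T c).isSome ↔ c ∈ sh) ∧
  (∀ i j₁ j₂ : ℕ, ∀ x y : Letter n, j₁ ≤ j₂ → T (i, j₁) = some x → T (i, j₂) = some y → r x y) ∧
  (∀ i₁ i₂ j : ℕ, ∀ x y : Letter n, i₁ ≤ i₂ → T (i₁, j) = some x → T (i₂, j) = some y → r x y) ∧
  (∀ i₁ i₂ j : ℕ, ∀ a : Fin n, i₁ ≠ i₂ → T (i₁, j) = some (false, a) →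
    T (i₂, j) ≠ some (false, a)) ∧
  (∀ i j₁ j₂ : ℕ, ∀ b : Fin n, j₁ ≠ j₂ → T (i, j₁) = some (true, b) →
    T (i, j₂) ≠ some (true, b))

/-- The unbarred reverse (row) reading word: unbarred entries, rows right to left,
rows top to bottom, skipping barred entries. -/
def uWord {n : ℕ} (sh : YoungDiagram) (T : Filling n) : List (Fin n) :=
  (List.range (sh.colLen 0)).flatMap fun i =>
    (List.range (sh.rowLen i)).reverse.filterMap fun j =>
      match T (i, j) with
      | some (false, a) => some a
      | _ => none

/-- The barred (column) reading word with bars removed: barred entries, columns bottom to top,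
columns left to right, skipping unbarred entries. -/
def vWord {n : ℕ} (sh : YoungDiagram) (T : Filling n) : List (Fin n) :=
  (List.range (sh.rowLen 0)).flatMap fun j =>
    (List.range (sh.colLen j)).reverse.filterMap fun i =>
      match T (i, j) with
      | some (true, b) => some b
      | _ => none

/-- The total reverse (row-column) reading word `w(T) = u(T)v(T)`. -/
def wWord {n : ℕ} (sh : YoungDiagram) (T : Filling n) : List (Fin n) :=
  uWord sh T ++ vWord sh T

/-- A word over `{1, …, n}` (encoded with `Fin n`, where `⟨i, _⟩` stands for the letter `i+1`)
is a ballot sequence if every prefix contains at least as many `i`'s as `i+1`'s. -/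
def IsBallot {n : ℕ} (w : List (Fin n)) : Prop :=
  ∀ p : List (Fin n), p <+: w → ∀ i : ℕ, ∀ h : i + 1 < n,
    p.count ⟨i + 1, h⟩ ≤ p.count ⟨i, Nat.lt_of_succ_lt h⟩

/-- A word over `{1, …, n}` is an `α`-ballot sequence if in every prefix the number of
`i+1`'s minus the number of `i`'s is at most `αᵢ − α_{i+1}`. -/
def IsAlphaBallot {n : ℕ} (α : Fin n → ℕ) (w : List (Fin n)) : Prop :=
  ∀ p : List (Fin n), p <+: w → ∀ i : ℕ, ∀ h : i + 1 < n,
    p.count ⟨i + 1, h⟩ + α ⟨i + 1, h⟩ ≤ p.count ⟨i, Nat.lt_of_succ_lt h⟩ + α ⟨i, Nat.lt_of_succ_lt h⟩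

/-- `y` covers `x` in the order `r`: they are adjacent (consecutive) with `x` below `y`. -/
def CoveredBy {n : ℕ} (r : Letter n → Letter n → Prop) (x y : Letter n) : Prop :=
  r x y ∧ x ≠ y ∧ ∀ z, r x z → r z y → z = x ∨ z = y

/-- `x` and `y` are adjacent (consecutive) in the order `r`, in either relative order. -/
def AdjacentIn {n : ℕ} (r : Letter n → Letter n → Prop) (x y : Letter n) : Prop :=
  CoveredBy r x y ∨ CoveredBy r y x

/-- `z` lies strictly between `x` and `y` in the order `r`. -/
def Between {n : ℕ} (r : Letter n → Letter n → Prop) (x y z : Letter n) : Prop :=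
  r x z ∧ r z y ∧ z ≠ x ∧ z ≠ y

/-- The order `r` is unbarred-tight: at most one barred letter occurs between any two
consecutive unbarred letters. -/
def UnbarredTight {n : ℕ} (r : Letter n → Letter n → Prop) : Prop :=
  ∀ i : ℕ, ∀ h : i + 1 < n, ∀ b₁ b₂ : Fin n,
    Between r (false, ⟨i, Nat.lt_of_succ_lt h⟩) (false, ⟨i + 1, h⟩) (true, b₁) →
    Between r (false, ⟨i, Nat.lt_of_succ_lt h⟩) (false, ⟨i + 1, h⟩) (true, b₂) → b₁ = b₂

/-- The order `r` is barred-tight: at most one unbarred letter occurs between any two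
consecutive barred letters. -/
def BarredTight {n : ℕ} (r : Letter n → Letter n → Prop) : Prop :=
  ∀ i : ℕ, ∀ h : i + 1 < n, ∀ a₁ a₂ : Fin n,
    Between r (true, ⟨i, Nat.lt_of_succ_lt h⟩) (true, ⟨i + 1, h⟩) (false, a₁) →
    Between r (true, ⟨i, Nat.lt_of_succ_lt h⟩) (true, ⟨i + 1, h⟩) (false, a₂) → a₁ = a₂

/-- Two boxes share an edge. -/
def BoxAdj (c d : ℕ × ℕ) : Prop :=
  (c.1 = d.1 ∧ (c.2 + 1 = d.2 ∨ d.2 + 1 = c.2)) ∨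
  (c.2 = d.2 ∧ (c.1 + 1 = d.1 ∨ d.1 + 1 = c.1))

/-- `c` and `d` are joined by a chain of boxes of `S`, each sharing an edge with the next. -/
def ConnIn (S : Set (ℕ × ℕ)) (c d : ℕ × ℕ) : Prop :=
  Relation.ReflTransGen (fun u v => u ∈ S ∧ v ∈ S ∧ BoxAdj u v) c d

/-- The orders `r` and `r'` agree except that the unbarred letter `a` and the barred letter `b̄`
are adjacent in both, with `a` immediately below `b̄` in `r` and `b̄` immediately below `a`
in `r'`. -/
def OrderSwitch {n : ℕ} (r r' : Letter n → Letter n → Prop) (a b : Fin n) : Prop :=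
  CoveredBy r (false, a) (true, b) ∧ CoveredBy r' (true, b) (false, a) ∧
  ∀ x y : Letter n, ¬(x = (false, a) ∧ y = (true, b)) → ¬(x = (true, b) ∧ y = (false, a)) →
    (r x y ↔ r' x y)

/-- The fillings `T` and `T'` are related by a conversion switch at the letters `a`, `b̄`:
they agree on all boxes not containing `a` or `b̄`, the set `S` of boxes containing `a` or `b̄`
is the same in both, and in each edge-connected component of `S` they contain the same number
of `a`'s. -/
def TableauSwitch {n : ℕ} (a b : Fin n) (T T' : Filling n) : Prop :=
  (∀ c, c ∉ {c | T c = some (false, a) ∨ T c = some (true, b)} → T' c = T c) ∧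
  (∀ c, c ∈ {c | T c = some (false, a) ∨ T c = some (true, b)} ↔
    (T' c = some (false, a) ∨ T' c = some (true, b))) ∧
  (∀ c, T c = some (false, a) ∨ T c = some (true, b) →
    {d | ConnIn {e | T e = some (false, a) ∨ T e = some (true, b)} c d ∧
      T d = some (false, a)}.ncard =
    {d | ConnIn {e | T e = some (false, a) ∨ T e = some (true, b)} c d ∧
      T' d = some (false, a)}.ncard)

/-- One step of conversion between pairs (total order, colored tableau of shape `sh`):
a single conversion switch, in either direction, through valid total orders and
colored tableaux. -/
def ConvStep {n : ℕ} (sh : YoungDiagram)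
    (p q : ((Letter n → Letter n → Prop) × Filling n)) : Prop :=
  IsLinExt p.1 ∧ IsLinExt q.1 ∧ IsColoredTableau p.1 sh p.2 ∧ IsColoredTableau q.1 sh q.2 ∧
  ∃ a b : Fin n, (OrderSwitch p.1 q.1 a b ∧ TableauSwitch a b p.2 q.2) ∨
    (OrderSwitch q.1 p.1 a b ∧ TableauSwitch a b q.2 p.2)

/-- `T` (w.r.t. `p.1`) and `T'` (w.r.t. `q.1`) correspond under conversion: they are connected
by a finite sequence of conversion switches through intermediate total orders and colored
tableaux. -/
def ConvertsTo {n : ℕ} (sh : YoungDiagram)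
    (p q : ((Letter n → Letter n → Prop) × Filling n)) : Prop :=
  Relation.ReflTransGen (ConvStep sh) p q

/-- The unbarred content of a filling: `α i` is the number of unbarred letters `i` in it. -/
def unbarredContent {n : ℕ} (sh : YoungDiagram) (T : Filling n) (i : Fin n) : ℕ :=
  (sh.cells.filter fun c => T c = some (false, i)).card

/-- The total content of a filling: the number of occurrences of `i` and `ī` together. -/
def totalContent {n : ℕ} (sh : YoungDiagram) (T : Filling n) (i : Fin n) : ℕ :=
  (sh.cells.filter fun c => T c = some (false, i) ∨ T c = some (true, i)).card

/-- The total color of a filling: the number of barred letters in it. -/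
def totalColor {n : ℕ} (sh : YoungDiagram) (T : Filling n) : ℕ :=
  (sh.cells.filter fun c => (T c).map Prod.fst = some true).card

/-- The natural order `1̄ < 1 < 2̄ < 2 < ⋯ < n̄ < n` on 𝒜ₙ. -/
def natOrd (n : ℕ) : Letter n → Letter n → Prop :=
  fun x y => x.2 < y.2 ∨ (x.2 = y.2 ∧ (x.1 = true ∨ y.1 = false))

/-- The small bar order `1̄ ≺ 2̄ ≺ ⋯ ≺ n̄ ≺ 1 ≺ 2 ≺ ⋯ ≺ n` on 𝒜ₙ. -/
def smallBarOrd (n : ℕ) : Letter n → Letter n → Prop :=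
  fun x y => (x.1 = true ∧ y.1 = false) ∨ (x.1 = y.1 ∧ x.2 ≤ y.2)

/-- `f` is a semistandard skew tableau of shape `outer / inner` with entries in `{1, …, n}`:
rows weakly increase, columns strictly increase. -/
def IsSkewSSYT {n : ℕ} (outer inner : YoungDiagram) (f : ℕ × ℕ → Option (Fin n)) : Prop :=
  (∀ c, (f c).isSome ↔ (c ∈ outer ∧ c ∉ inner)) ∧
  (∀ i j₁ j₂ : ℕ, ∀ x y : Fin n, j₁ ≤ j₂ → f (i, j₁) = some x → f (i, j₂) = some y → x ≤ y) ∧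
  (∀ i₁ i₂ j : ℕ, ∀ x y : Fin n, i₁ < i₂ → f (i₁, j) = some x → f (i₂, j) = some y → x < y)

/-- The reverse row reading word of a (skew) tableau supported inside the rows of `sh`:
entries along rows right to left, rows top to bottom. -/
def revRowWord {n : ℕ} (sh : YoungDiagram) (f : ℕ × ℕ → Option (Fin n)) : List (Fin n) :=
  (List.range (sh.colLen 0)).flatMap fun i =>
    (List.range (sh.rowLen i)).reverse.filterMap fun j => f (i, j)

namespace RibbonAux

/-- Largest column index plus one occurring in row `i` of `S` (0 if the row is empty). -/
def rowSup (S : Finset (ℕ × ℕ)) (i : ℕ) : ℕ :=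
  S.sup fun c => if c.1 = i then c.2 + 1 else 0

/-- Smallest column index occurring in row `i` of `S`. -/
noncomputable def rowInf (S : Finset (ℕ × ℕ)) (i : ℕ) : ℕ := sInf {j | (i, j) ∈ S}

lemma lt_rowSup {S : Finset (ℕ × ℕ)} {i j : ℕ} (h : (i, j) ∈ S) : j < rowSup S i := by
  have h1 : (if (i, j).1 = i then (i, j).2 + 1 else 0) ≤ rowSup S i :=
    Finset.le_sup (f := fun c : ℕ × ℕ => if c.1 = i then c.2 + 1 else 0) h
  rw [if_pos rfl] at h1
  exact Nat.lt_of_succ_le h1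

lemma rowSup_mem {S : Finset (ℕ × ℕ)} {i : ℕ} (h : rowSup S i ≠ 0) :
    (i, rowSup S i - 1) ∈ S := by
  have hne : S.Nonempty := by
    rcases Finset.eq_empty_or_nonempty S with h0 | h0
    · exact absurd (by simp [rowSup, h0]) h
    · exact h0
  obtain ⟨c, hc, hc2⟩ := Finset.exists_mem_eq_sup S hne
    (fun c : ℕ × ℕ => if c.1 = i then c.2 + 1 else 0)
  obtain ⟨ci, cj⟩ := c
  rw [rowSup] at h ⊢
  rw [hc2] at h ⊢
  by_cases hci : ci = i
  · subst hci; simpa using hc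
  · simp [hci] at h

lemma rowInf_le {S : Finset (ℕ × ℕ)} {i j : ℕ} (h : (i, j) ∈ S) : rowInf S i ≤ j :=
  Nat.sInf_le h

lemma rowInf_mem {S : Finset (ℕ × ℕ)} {i : ℕ} (h : rowSup S i ≠ 0) :
    (i, rowInf S i) ∈ S := by
  have hne : {j | (i, j) ∈ S}.Nonempty := ⟨rowSup S i - 1, rowSup_mem h⟩
  exact Nat.sInf_mem hne

/-- Cells of the Young diagram with row-length profile `f`. -/
def profCells (f : ℕ → ℕ) (N : ℕ) : Finset (ℕ × ℕ) :=
  (Finset.range N ×ˢ Finset.range (f 0)).filter fun c => c.2 < f c.1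

lemma mem_profCells {f : ℕ → ℕ} {N : ℕ} (hf : ∀ i j, i ≤ j → f j ≤ f i)
    (h0 : ∀ i, N ≤ i → f i = 0) {c : ℕ × ℕ} :
    c ∈ profCells f N ↔ c.2 < f c.1 := by
  simp only [profCells, Finset.mem_filter, Finset.mem_product, Finset.mem_range]
  constructor
  · rintro ⟨-, h⟩; exact h
  · intro h
    refine ⟨⟨?_, ?_⟩, h⟩
    · by_contra hN
      push_neg at hN
      rw [h0 _ hN] at h
      omega
    · exact lt_of_lt_of_le h (hf 0 c.1 (Nat.zero_le _))

/-- The Young diagram with weakly decreasing, eventually zero row-length profile `f`. -/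
def ofProfile (f : ℕ → ℕ) (N : ℕ) (hf : ∀ i j, i ≤ j → f j ≤ f i)
    (h0 : ∀ i, N ≤ i → f i = 0) : YoungDiagram where
  cells := profCells f N
  isLowerSet := by
    intro c d hdc hc
    rw [Finset.mem_coe, mem_profCells hf h0] at hc ⊢
    exact lt_of_le_of_lt hdc.2 (lt_of_lt_of_le hc (hf _ _ hdc.1))

lemma mem_ofProfile {f : ℕ → ℕ} {N : ℕ} (hf : ∀ i j, i ≤ j → f j ≤ f i)
    (h0 : ∀ i, N ≤ i → f i = 0) {c : ℕ × ℕ} :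
    c ∈ (ofProfile f N hf h0).cells ↔ c.2 < f c.1 :=
  mem_profCells hf h0

/-- In a colored tableau, the boxes whose entry is one of two letters, one of which
covers the other, form a skew Young diagram. -/
lemma skew_of_covered {n : ℕ} (r : Letter n → Letter n → Prop) (hr : IsLinExt r)
    (lo hi : Letter n) (hcov : CoveredBy r lo hi) (sh : YoungDiagram) (T : Filling n)
    (hT : IsColoredTableau r sh T) :
    ∃ κ μ : YoungDiagram, κ ≤ μ ∧
      (sh.cells.filter fun c => T c = some lo ∨ T c = some hi) = μ.cells \ κ.cells := by
  haveI := hr.1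
  obtain ⟨hdom, hrow, hcol, -, -⟩ := hT
  set S : Finset (ℕ × ℕ) := sh.cells.filter (fun c => T c = some lo ∨ T c = some hi) with hS
  have hmemS : ∀ i j : ℕ,
      (i, j) ∈ S ↔ ((i, j) ∈ sh ∧ (T (i, j) = some lo ∨ T (i, j) = some hi)) := by
    intro i j
    simp [hS, Finset.mem_filter]
  have hrlo : ∀ x : Letter n, x = lo ∨ x = hi → r lo x := by
    rintro x (rfl | rfl)
    · exact refl_of r x
    · exact hcov.1
  have hentry : ∀ i j : ℕ, (i, j) ∈ sh → ∃ z, T (i, j) = some z := by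
    intro i j h
    exact Option.isSome_iff_exists.mp ((hdom (i, j)).2 h)
  -- the master "sandwich" lemma
  have hmid : ∀ i₁ i₂ i j₁ j₂ j : ℕ, (i₁, j₁) ∈ S → (i₂, j₂) ∈ S →
      i₁ ≤ i → i ≤ i₂ → j₁ ≤ j → j ≤ j₂ → (i, j) ∈ S := by
    intro i₁ i₂ i j₁ j₂ j h1 h2 hi1 hi2 hj1 hj2
    rw [hmemS] at h1 h2 ⊢
    have hsh : (i, j) ∈ sh := sh.up_left_mem hi2 hj2 h2.1
    obtain ⟨z, hz⟩ := hentry i j hsh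
    -- lower bound through (i₁, j)
    have hsh1 : (i₁, j) ∈ sh := sh.up_left_mem hi1 le_rfl hsh
    obtain ⟨y, hy⟩ := hentry i₁ j hsh1
    have hyz : r y z := hcol i₁ i j y z hi1 hy hz
    have hlz : r lo z := by
      rcases h1.2 with hx | hx
      · exact trans_of r (trans_of r (hrlo lo (Or.inl rfl))
          (hrow i₁ j₁ j lo y hj1 hx hy)) hyz
      · exact trans_of r (trans_of r (hrlo hi (Or.inr rfl))
          (hrow i₁ j₁ j hi y hj1 hx hy)) hyz
    -- upper bound through (i, j₂)
    have hsh2 : (i, j₂) ∈ sh := sh.up_left_mem hi2 le_rfl h2.1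
    obtain ⟨w, hw⟩ := hentry i j₂ hsh2
    have hzw : r z w := hrow i j j₂ z w hj2 hz hw
    have hzhi : r z hi := by
      rcases h2.2 with hx | hx
      · exact trans_of r (trans_of r hzw (hcol i i₂ j₂ w lo hi2 hw hx)) hcov.1
      · exact trans_of r hzw (hcol i i₂ j₂ w hi hi2 hw hx)
    refine ⟨hsh, ?_⟩
    rcases hcov.2.2 z hlz hzhi with rfl | rfl
    · exact Or.inl hz
    · exact Or.inr hz
  -- bounds
  set N : ℕ := sh.colLen 0 with hN
  have hrowN : ∀ i j : ℕ, (i, j) ∈ S → i < N := by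
    intro i j h
    have h1 : (i, j) ∈ sh := ((hmemS i j).1 h).1
    have h2 : i < sh.colLen j := YoungDiagram.mem_iff_lt_colLen.mp h1
    exact lt_of_lt_of_le h2 (sh.colLen_anti 0 j (Nat.zero_le _))
  have huz : ∀ i : ℕ, N ≤ i → rowSup S i = 0 := by
    intro i hi
    by_contra h
    exact absurd hi (Nat.not_le.mpr (hrowN i _ (rowSup_mem h)))
  -- the profiles
  set μf : ℕ → ℕ := fun i => (Finset.Ico i N).sup (rowSup S) with hμf
  have hμanti : ∀ i j : ℕ, i ≤ j → μf j ≤ μf i := by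
    intro i j hij
    exact Finset.sup_mono (Finset.Ico_subset_Ico hij le_rfl)
  have hμ0 : ∀ i : ℕ, N ≤ i → μf i = 0 := by
    intro i hi
    simp [hμf, Finset.Ico_eq_empty (by omega : ¬ i < N)]
  -- key monotonicity: everything weakly below a nonempty row is bounded by its rowSup
  have hM : ∀ i i' j : ℕ, rowSup S i ≠ 0 → i ≤ i' → (i', j) ∈ S → j < rowSup S i := by
    intro i i' j h hii' hmem
    have hl := rowInf_mem h
    rcases le_or_gt (rowInf S i) j with hle | hlt
    · exact lt_rowSup (hmid i i' i (rowInf S i) j j hl hmem le_rfl hii' hle le_rfl)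
    · exact lt_of_lt_of_le (lt_of_lt_of_le hlt (le_of_lt (lt_rowSup hl))) le_rfl
  have hμeq : ∀ i : ℕ, rowSup S i ≠ 0 → μf i = rowSup S i := by
    intro i h
    refine le_antisymm (Finset.sup_le ?_) (Finset.le_sup ?_)
    · intro i' hi'
      rw [Finset.mem_Ico] at hi'
      by_cases h' : rowSup S i' = 0
      · simp [h']
      · have := hM i i' (rowSup S i' - 1) h hi'.1 (rowSup_mem h')
        omega
    · rw [Finset.mem_Ico]
      exact ⟨le_rfl, hrowN i _ (rowInf_mem h)⟩
  set κf : ℕ → ℕ := fun i => if rowSup S i = 0 then μf i else rowInf S i with hκf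
  have hκeq0 : ∀ i : ℕ, rowSup S i = 0 → κf i = μf i := by
    intro i h; simp [hκf, h]
  have hκeq : ∀ i : ℕ, rowSup S i ≠ 0 → κf i = rowInf S i := by
    intro i h; simp [hκf, h]
  have hκle : ∀ i : ℕ, κf i ≤ μf i := by
    intro i
    by_cases h : rowSup S i = 0
    · rw [hκeq0 i h]
    · rw [hκeq i h, hμeq i h]
      exact le_of_lt (lt_rowSup (rowInf_mem h))
  have hκsucc : ∀ i : ℕ, κf (i + 1) ≤ κf i := by
    intro i
    by_cases h : rowSup S i = 0
    · calc κf (i + 1) ≤ μf (i + 1) := hκle _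
        _ ≤ μf i := hμanti i (i + 1) (Nat.le_succ i)
        _ = κf i := (hκeq0 i h).symm
    · have hli := rowInf_mem h
      by_cases h' : rowSup S (i + 1) = 0
      · have hkey : μf (i + 1) ≤ rowInf S i := by
          refine Finset.sup_le ?_
          intro i' hi'
          rw [Finset.mem_Ico] at hi'
          by_cases h'' : rowSup S i' = 0
          · simp [h'']
          · by_contra hcon
            push_neg at hcon
            have hc2 := rowSup_mem h''
            have hmem : (i + 1, rowSup S i' - 1) ∈ S :=
              hmid i i' (i + 1) (rowInf S i) (rowSup S i' - 1) (rowSup S i' - 1)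
                hli hc2 (Nat.le_succ i) hi'.1 (by omega) le_rfl
            have h5 := lt_rowSup hmem
            omega
        rw [hκeq0 (i + 1) h', hκeq i h]
        exact hkey
      · rw [hκeq (i + 1) h', hκeq i h]
        by_contra hcon
        push_neg at hcon
        have hl' := rowInf_mem h'
        have hmem : (i + 1, rowInf S i) ∈ S :=
          hmid i (i + 1) (i + 1) (rowInf S i) (rowInf S (i + 1)) (rowInf S i)
            hli hl' (Nat.le_succ i) le_rfl le_rfl (le_of_lt hcon)
        exact absurd (rowInf_le hmem) (by omega)
  have hκanti : ∀ i j : ℕ, i ≤ j → κf j ≤ κf i := by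
    intro i j hij
    induction j with
    | zero =>
      have h0 : i = 0 := by omega
      subst h0; exact le_rfl
    | succ k ih =>
      rcases Nat.lt_or_ge i (k + 1) with hlt | hge
      · exact le_trans (hκsucc k) (ih (by omega))
      · have he : i = k + 1 := by omega
        subst he; exact le_rfl
  have hκ0 : ∀ i : ℕ, N ≤ i → κf i = 0 := by
    intro i hi
    have := hκle i
    rw [hμ0 i hi] at this
    omega
  -- row characterization
  have hchar : ∀ i j : ℕ, (i, j) ∈ S ↔ (κf i ≤ j ∧ j < μf i) := by
    intro i j
    constructor
    · intro h
      have hne : rowSup S i ≠ 0 := by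
        have := lt_rowSup h; omega
      refine ⟨?_, ?_⟩
      · rw [hκeq i hne]; exact rowInf_le h
      · rw [hμeq i hne]; exact lt_rowSup h
    · rintro ⟨h1, h2⟩
      have hne : rowSup S i ≠ 0 := by
        by_contra h0
        rw [hκeq0 i h0] at h1
        omega
      rw [hκeq i hne] at h1
      rw [hμeq i hne] at h2
      exact hmid i i i (rowInf S i) (rowSup S i - 1) j (rowInf_mem hne) (rowSup_mem hne)
        le_rfl le_rfl h1 (by omega)
  refine ⟨ofProfile κf N hκanti hκ0, ofProfile μf N hμanti hμ0, ?_, ?_⟩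
  · rw [← YoungDiagram.cells_subset_iff]
    intro c hc
    rw [mem_ofProfile hκanti hκ0] at hc
    rw [mem_ofProfile hμanti hμ0]
    exact lt_of_lt_of_le hc (hκle c.1)
  · ext c
    obtain ⟨i, j⟩ := c
    rw [Finset.mem_sdiff, mem_ofProfile hμanti hμ0, mem_ofProfile hκanti hκ0, hchar]
    simp only [not_lt]
    exact and_comm

end RibbonAux

/-- If the unbarred letter `a` and the barred letter `b̄` are adjacent in the
total order `r`, then in any colored tableau `T` with respect to `r` the set of boxes
containing `a` or `b̄` is a skew Young diagram containing no 2×2 square, i.e. a ribbon. -/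
theorem boxes_of_adjacent_letters_form_ribbon {n : ℕ} (r : Letter n → Letter n → Prop)
    (hr : IsLinExt r) (a b : Fin n) (hadj : AdjacentIn r (false, a) (true, b))
    (sh : YoungDiagram) (T : Filling n) (hT : IsColoredTableau r sh T) :
    (∃ κ μ : YoungDiagram, κ ≤ μ ∧
      (sh.cells.filter fun c => T c = some (false, a) ∨ T c = some (true, b)) =
        μ.cells \ κ.cells) ∧
    (∀ i j : ℕ,
      ¬((i, j) ∈ (sh.cells.filter fun c => T c = some (false, a) ∨ T c = some (true, b)) ∧
        (i + 1, j) ∈ (sh.cells.filter fun c => T c = some (false, a) ∨ T c = some (true, b)) ∧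
        (i, j + 1) ∈ (sh.cells.filter fun c => T c = some (false, a) ∨ T c = some (true, b)) ∧
        (i + 1, j + 1) ∈
          (sh.cells.filter fun c => T c = some (false, a) ∨ T c = some (true, b)))) := by
  haveI := hr.1
  constructor
  · rcases hadj with hc | hc
    · exact RibbonAux.skew_of_covered r hr _ _ hc sh T hT
    · obtain ⟨κ, μ, hle, heq⟩ := RibbonAux.skew_of_covered r hr _ _ hc sh T hT
      refine ⟨κ, μ, hle, ?_⟩
      rw [← heq]
      exact Finset.filter_congr (fun c _ => or_comm)
  · obtain ⟨hdom, hrow, hcol, hcolrep, hrowrep⟩ := hT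
    intro i j h
    obtain ⟨h1, h2, h3, h4⟩ := h
    have hAB : ((false, a) : Letter n) ≠ (true, b) := by simp
    have hget : ∀ c ∈ (sh.cells.filter fun c =>
        T c = some ((false, a) : Letter n) ∨ T c = some (true, b)),
        T c = some ((false, a) : Letter n) ∨ T c = some (true, b) :=
      fun c hc => (Finset.mem_filter.1 hc).2
    have e1 := hget _ h1
    have e2 := hget _ h2
    have e3 := hget _ h3
    have e4 := hget _ h4
    rcases hadj with hc | hc
    · -- a is covered by b̄
      have hx : T (i, j) = some ((false, a) : Letter n) := by
        rcases e1 with h | h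
        · exact h
        · exfalso
          rcases e3 with h' | h'
          · exact hAB (antisymm_of r (hrow i j (j + 1) _ _ (Nat.le_succ j) h h') hc.1).symm
          · exact hrowrep i j (j + 1) b (by omega) h h'
      have hz : T (i + 1, j) = some ((true, b) : Letter n) := by
        rcases e2 with h | h
        · exact absurd h (hcolrep i (i + 1) j a (by omega) hx)
        · exact h
      rcases e4 with h | h
      · exact hAB (antisymm_of r (hrow (i + 1) j (j + 1) _ _ (Nat.le_succ j) hz h) hc.1).symm
      · exact hrowrep (i + 1) j (j + 1) b (by omega) hz h
    · -- b̄ is covered by a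
      have hx : T (i, j) = some ((true, b) : Letter n) := by
        rcases e1 with h | h
        · exfalso
          rcases e2 with h' | h'
          · exact hcolrep i (i + 1) j a (by omega) h h'
          · exact hAB (antisymm_of r (hcol i (i + 1) j _ _ (Nat.le_succ i) h h') hc.1)
        · exact h
      have hy : T (i, j + 1) = some ((false, a) : Letter n) := by
        rcases e3 with h | h
        · exact h
        · exact absurd h (hrowrep i j (j + 1) b (by omega) hx)
      rcases e4 with h | h
      · exact hcolrep i (i + 1) (j + 1) a (by omega) hy h
      · exact hAB (antisymm_of r (hcol i (i + 1) (j + 1) _ _ (Nat.le_succ i) hy h) hc.1)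
end

section
/- Let D be a nonempty edge-connected skew Young diagram containing no 2×2 square (a connected ribbon), let a be an unbarred letter and b̄ a barred letter of 𝒜ₙ, and let < be a total order on 𝒜ₙ in which a and b̄ are adjacent (in either relative order). Then there are exactly two fillings of the boxes of D with entries from {a, b̄} such that every row and column of the filling is weakly increasing with respect to <, no two a's appear in the same column, and no two b̄'s appear in the same row. -/
open scoped Classical

private lemma iter_free {S : Finset (ℕ × ℕ)} {s : ℕ × ℕ → ℕ × ℕ} {Fr : ℕ × ℕ → Prop}
    {φ : ℕ × ℕ → ℤ} {M : ℕ}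
    (hbd : ∀ c ∈ S, -(M:ℤ) ≤ φ c ∧ φ c ≤ M)
    (hmem : ∀ c ∈ S, s c ∈ S)
    (hfree : ∀ c, Fr c → s c = c)
    (hphi : ∀ c ∈ S, ¬ Fr c → φ (s c) = φ c + 1) :
    ∀ c ∈ S, s^[2 * M + 1] c ∈ S ∧ Fr (s^[2 * M + 1] c) := by
  have key : ∀ k (c : ℕ × ℕ), c ∈ S →
      s^[k] c ∈ S ∧ (Fr (s^[k] c) ∨ φ c + k ≤ φ (s^[k] c)) := by
    intro k
    induction k with
    | zero => intro c hc; exact ⟨hc, Or.inr (by simp)⟩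
    | succ k ih =>
      intro c hc
      obtain ⟨hmem', hk⟩ := ih c hc
      rw [Function.iterate_succ_apply']
      by_cases hf : Fr (s^[k] c)
      · rw [hfree _ hf]; exact ⟨hmem', Or.inl hf⟩
      · rcases hk with hk | hk
        · exact absurd hk hf
        · refine ⟨hmem _ hmem', Or.inr ?_⟩
          rw [hphi _ hmem' hf]; push_cast; push_cast at hk; linarith
  intro c hc
  obtain ⟨h1, h2⟩ := key (2 * M + 1) c hc
  refine ⟨h1, ?_⟩
  rcases h2 with h | h
  · exact h
  · exfalso
    obtain ⟨b1, -⟩ := hbd c hc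
    obtain ⟨-, b2⟩ := hbd _ h1
    push_cast at h; linarith

private lemma free_unique {S : Finset (ℕ × ℕ)} {s : ℕ × ℕ → ℕ × ℕ} {Fr : ℕ × ℕ → Prop} {K : ℕ}
    (hiter : ∀ c ∈ S, s^[K] c ∈ S ∧ Fr (s^[K] c))
    (hfree : ∀ c, Fr c → s c = c)
    (hadjstep : ∀ c d, c ∈ S → d ∈ S → BoxAdj c d → s c = d ∨ s d = c)
    {c d : ℕ × ℕ} (hfc : Fr c) (hfd : Fr d)
    (hcd : ConnIn (↑S) c d) : c = d := by
  have half : ∀ u v : ℕ × ℕ, u ∈ S → s u = v → s^[K] u = s^[K] v := by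
    intro u v hu huv
    have h1 : s^[K + 1] u = s^[K] v := by rw [Function.iterate_succ_apply, huv]
    have h2 : s^[K + 1] u = s^[K] u := by
      rw [Function.iterate_succ_apply', hfree _ (hiter u hu).2]
    rw [← h2, h1]
  have step : ∀ u v : ℕ × ℕ, u ∈ S → v ∈ S → BoxAdj u v → s^[K] u = s^[K] v := by
    intro u v hu hv hadj
    rcases hadjstep u v hu hv hadj with h | h
    · exact half u v hu h
    · exact (half v u hv h).symm
  have key : ∀ {x y : ℕ × ℕ}, ConnIn (↑S) x y → s^[K] x = s^[K] y := by
    intro x y h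
    induction h with
    | refl => rfl
    | tail h1 h2 ih => exact ih.trans (step _ _ h2.1 h2.2.1 h2.2.2)
  have e := key hcd
  rwa [Function.iterate_fixed (hfree _ hfc), Function.iterate_fixed (hfree _ hfd)] at e


private def sA (S : Finset (ℕ × ℕ)) (c : ℕ × ℕ) : ℕ × ℕ :=
  if (c.1, c.2 + 1) ∈ S then (c.1, c.2 + 1)
  else if 0 < c.1 ∧ (c.1 - 1, c.2) ∈ S then (c.1 - 1, c.2) else c

private def FrA (S : Finset (ℕ × ℕ)) (c : ℕ × ℕ) : Prop :=
  (c.1, c.2 + 1) ∉ S ∧ ¬(0 < c.1 ∧ (c.1 - 1, c.2) ∈ S)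

private lemma sA_free {S : Finset (ℕ × ℕ)} {c : ℕ × ℕ} (h : FrA S c) : sA S c = c := by
  rw [sA, if_neg h.1, if_neg h.2]

private lemma sA_mem {S : Finset (ℕ × ℕ)} {c : ℕ × ℕ} (h : c ∈ S) : sA S c ∈ S := by
  rw [sA]; split_ifs with h1 h2
  · exact h1
  · exact h2.2
  · exact h

private lemma sA_phi {S : Finset (ℕ × ℕ)} {c : ℕ × ℕ} (h : c ∈ S) (hf : ¬ FrA S c) :
    ((sA S c).2 : ℤ) - (sA S c).1 = ((c.2 : ℤ) - c.1) + 1 := by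
  rw [FrA] at hf; rw [sA]
  split_ifs with h1 h2
  · simp; ring
  · simp only []
    have : 0 < c.1 := h2.1
    push_cast [Nat.cast_sub (by omega : 1 ≤ c.1)]
    ring
  · exact absurd ⟨h1, h2⟩ hf

private lemma sA_adj {S : Finset (ℕ × ℕ)}
    (hup : ∀ i j : ℕ, (i + 1, j) ∈ S → (i + 1, j + 1) ∈ S → (i, j) ∈ S → False)
    (c d : ℕ × ℕ) (hc : c ∈ S) (hd : d ∈ S) (h : BoxAdj c d) :
    sA S c = d ∨ sA S d = c := by
  obtain ⟨i, j⟩ := c; obtain ⟨i', j'⟩ := d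
  rcases h with ⟨h1, h2 | h2⟩ | ⟨h1, h2 | h2⟩
  · left
    simp only at h1 h2; subst h1; subst h2
    rw [sA, if_pos (by simpa using hd)]
  · right
    simp only at h1 h2; subst h1; subst h2
    rw [sA, if_pos (by simpa using hc)]
  · -- c above d : i + 1 = i', j = j'
    right
    simp only at h1 h2; subst h1; subst h2
    have hnr : (i + 1, j + 1) ∉ S := fun hm => hup i j hd hm hc
    rw [sA, if_neg (by simpa using hnr), if_pos (by simp; exact hc)]
    simp
  · -- d above c : i' + 1 = i, j = j'
    left
    simp only at h1 h2; subst h1; subst h2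
    have hnr : (i' + 1, j + 1) ∉ S := fun hm => hup i' j hc hm hd
    rw [sA, if_neg (by simpa using hnr), if_pos (by simp; exact hd)]
    simp

private def FA {n : ℕ} (a b : Fin n) (S : Finset (ℕ × ℕ)) (v : Letter n) : Filling n :=
  fun c => if c ∈ S then
    some (if (c.1, c.2 + 1) ∈ S then ((false, a) : Letter n)
      else if 0 < c.1 ∧ (c.1 - 1, c.2) ∈ S then (true, b) else v)
  else none

private lemma FA_none {n : ℕ} {a b : Fin n} {S : Finset (ℕ × ℕ)} {v : Letter n} {c : ℕ × ℕ}
    (h : c ∉ S) : FA a b S v c = none := by rw [FA]; exact if_neg h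

private lemma FA_mem {n : ℕ} {a b : Fin n} {S : Finset (ℕ × ℕ)} {v : Letter n} {c : ℕ × ℕ}
    {x : Letter n} (h : FA a b S v c = some x) : c ∈ S := by
  by_contra hc; rw [FA_none hc] at h; exact nomatch h

private lemma FA_right {n : ℕ} {a b : Fin n} {S : Finset (ℕ × ℕ)} {v : Letter n} {c : ℕ × ℕ}
    (h : c ∈ S) (hr : (c.1, c.2 + 1) ∈ S) : FA a b S v c = some (false, a) := by
  rw [FA, if_pos h, if_pos hr]

private lemma FA_up {n : ℕ} {a b : Fin n} {S : Finset (ℕ × ℕ)} {v : Letter n} {c : ℕ × ℕ}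
    (h : c ∈ S) (hr : (c.1, c.2 + 1) ∉ S) (h0 : 0 < c.1) (hu : (c.1 - 1, c.2) ∈ S) :
    FA a b S v c = some (true, b) := by
  rw [FA, if_pos h, if_neg hr, if_pos ⟨h0, hu⟩]

private lemma FA_freecell {n : ℕ} {a b : Fin n} {S : Finset (ℕ × ℕ)} {v : Letter n} {c : ℕ × ℕ}
    (h : c ∈ S) (hf : FrA S c) : FA a b S v c = some v := by
  rw [FA, if_pos h, if_neg hf.1, if_neg hf.2]

private lemma FA_cases {n : ℕ} {a b : Fin n} {S : Finset (ℕ × ℕ)} {v : Letter n} {c : ℕ × ℕ}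
    {x : Letter n} (h : FA a b S v c = some x) :
    x = (false, a) ∨ x = (true, b) ∨ x = v := by
  have hc := FA_mem h
  rw [FA, if_pos hc] at h
  split_ifs at h with h1 h2
  · exact Or.inl (Option.some_injective _ h).symm
  · exact Or.inr (Or.inl (Option.some_injective _ h).symm)
  · exact Or.inr (Or.inr (Option.some_injective _ h).symm)

private lemma FA_isSome {n : ℕ} {a b : Fin n} {S : Finset (ℕ × ℕ)} {v : Letter n} {c : ℕ × ℕ} :
    (FA a b S v c).isSome ↔ c ∈ S := by
  rw [FA]; split_ifs with h <;> simp [h]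

private theorem caseA {n : ℕ} (r : Letter n → Letter n → Prop)
    (hr : IsLinExt r) (a b : Fin n) (hcov : CoveredBy r (false, a) (true, b))
    (D : Finset (ℕ × ℕ)) (hne : D.Nonempty)
    (hrow : ∀ i j₁ j j₂ : ℕ, (i, j₁) ∈ D → (i, j₂) ∈ D → j₁ ≤ j → j ≤ j₂ → (i, j) ∈ D)
    (hcol : ∀ i₁ i i₂ j : ℕ, (i₁, j) ∈ D → (i₂, j) ∈ D → i₁ ≤ i → i ≤ i₂ → (i, j) ∈ D)
    (hup : ∀ i j : ℕ, (i + 1, j) ∈ D → (i + 1, j + 1) ∈ D → (i, j) ∈ D → False)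
    (hconn : ∀ c ∈ D, ∀ d ∈ D, ConnIn (↑D) c d) :
    Nat.card {f : Filling n //
      (∀ c, (f c).isSome ↔ c ∈ D) ∧
      (∀ c ∈ D, f c = some (false, a) ∨ f c = some (true, b)) ∧
      (∀ i j₁ j₂ : ℕ, ∀ x y : Letter n, j₁ ≤ j₂ →
        f (i, j₁) = some x → f (i, j₂) = some y → r x y) ∧
      (∀ i₁ i₂ j : ℕ, ∀ x y : Letter n, i₁ ≤ i₂ →
        f (i₁, j) = some x → f (i₂, j) = some y → r x y) ∧
      (∀ i₁ i₂ j : ℕ, i₁ ≠ i₂ → f (i₁, j) = some (false, a) → f (i₂, j) ≠ some (false, a)) ∧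
      (∀ i j₁ j₂ : ℕ, j₁ ≠ j₂ → f (i, j₁) = some (true, b) → f (i, j₂) ≠ some (true, b))} =
      2 := by
  haveI := hr.1
  have hAB : r (false, a) (true, b) := hcov.1
  have hABne : ((false, a) : Letter n) ≠ (true, b) := by simp
  have hBA : ¬ r (true, b) (false, a) := fun h => hABne (antisymm hAB h)
  have hrefl : ∀ x : Letter n, r x x := fun x => refl_of r x
  -- the unique free cell
  set M : ℕ := D.sup Prod.fst + D.sup Prod.snd with hM
  set K : ℕ := 2 * M + 1 with hK
  have hbd : ∀ c ∈ D, -(M : ℤ) ≤ (c.2 : ℤ) - c.1 ∧ ((c.2 : ℤ) - c.1) ≤ M := by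
    intro c hc
    have h1 : c.1 ≤ D.sup Prod.fst := Finset.le_sup (f := Prod.fst) hc
    have h2 : c.2 ≤ D.sup Prod.snd := Finset.le_sup (f := Prod.snd) hc
    constructor <;> [skip; skip] <;> push_cast <;> omega
  have hiter : ∀ c ∈ D, (sA D)^[K] c ∈ D ∧ FrA D ((sA D)^[K] c) :=
    iter_free hbd (fun c hc => sA_mem hc) (fun c hf => sA_free hf)
      (fun c hc hf => sA_phi hc hf)
  obtain ⟨c, hc⟩ := hne
  obtain ⟨hc₀mem, hc₀free⟩ := hiter c hc
  set c₀ : ℕ × ℕ := (sA D)^[K] c with hc₀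
  have funiq : ∀ d ∈ D, FrA D d → d = c₀ := fun d hd hfd =>
    free_unique hiter (fun _ hf => sA_free hf) (sA_adj hup) hfd hc₀free
      (hconn d hd c₀ hc₀mem)
  -- validity of the two candidate fillings
  have valid : ∀ v : Letter n, (v = (false, a) ∨ v = (true, b)) →
      (∀ c, (FA a b D v c).isSome ↔ c ∈ D) ∧
      (∀ c ∈ D, FA a b D v c = some (false, a) ∨ FA a b D v c = some (true, b)) ∧
      (∀ i j₁ j₂ : ℕ, ∀ x y : Letter n, j₁ ≤ j₂ →
        FA a b D v (i, j₁) = some x → FA a b D v (i, j₂) = some y → r x y) ∧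
      (∀ i₁ i₂ j : ℕ, ∀ x y : Letter n, i₁ ≤ i₂ →
        FA a b D v (i₁, j) = some x → FA a b D v (i₂, j) = some y → r x y) ∧
      (∀ i₁ i₂ j : ℕ, i₁ ≠ i₂ → FA a b D v (i₁, j) = some (false, a) →
        FA a b D v (i₂, j) ≠ some (false, a)) ∧
      (∀ i j₁ j₂ : ℕ, j₁ ≠ j₂ → FA a b D v (i, j₁) = some (true, b) →
        FA a b D v (i, j₂) ≠ some (true, b)) := by
    intro v hv
    have hvalcases : ∀ {c : ℕ × ℕ} {x : Letter n}, FA a b D v c = some x →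
        x = (false, a) ∨ x = (true, b) := by
      intro c x h
      rcases FA_cases h with h' | h' | h'
      · exact Or.inl h'
      · exact Or.inr h'
      · rw [h']; exact hv
    have rowA : ∀ i j₁ j₂ : ℕ, j₁ < j₂ → (i, j₁) ∈ D → (i, j₂) ∈ D →
        FA a b D v (i, j₁) = some (false, a) := by
      intro i j₁ j₂ hlt h1 h2
      exact FA_right h1 (hrow i j₁ (j₁ + 1) j₂ h1 h2 (Nat.le_succ _) (by omega))
    have colB : ∀ i₁ i₂ j : ℕ, i₁ < i₂ → (i₁, j) ∈ D → (i₂, j) ∈ D →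
        FA a b D v (i₂, j) = some (true, b) := by
      intro i₁ i₂ j hlt h1 h2
      have e : i₂ - 1 + 1 = i₂ := by omega
      have hmid : (i₂ - 1, j) ∈ D := hcol i₁ (i₂ - 1) i₂ j h1 h2 (by omega) (by omega)
      have hnr : (i₂, j + 1) ∉ D := fun hm =>
        hup (i₂ - 1) j (by rw [e]; exact h2) (by rw [e]; exact hm) hmid
      exact FA_up h2 hnr (by omega) hmid
    refine ⟨fun c => FA_isSome, ?_, ?_, ?_, ?_, ?_⟩
    · intro c hc'
      rcases hvalcases (x := (FA a b D v c).get (FA_isSome.2 hc'))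
          (Option.eq_some_of_isSome (FA_isSome.2 hc')) with h | h
      · left; rw [Option.eq_some_of_isSome (FA_isSome.2 hc'), h]
      · right; rw [Option.eq_some_of_isSome (FA_isSome.2 hc'), h]
    · intro i j₁ j₂ x y hle hx hy
      rcases eq_or_lt_of_le hle with rfl | hlt
      · rw [hx] at hy
        rw [Option.some_injective _ hy]; exact hrefl y
      · have h1 := FA_mem hx
        have h2 := FA_mem hy
        have := rowA i j₁ j₂ hlt h1 h2
        rw [this] at hx
        rw [← Option.some_injective _ hx]
        rcases hvalcases hy with h | h <;> rw [h]
        · exact hrefl _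
        · exact hAB
    · intro i₁ i₂ j x y hle hx hy
      rcases eq_or_lt_of_le hle with rfl | hlt
      · rw [hx] at hy
        rw [Option.some_injective _ hy]; exact hrefl y
      · have h1 := FA_mem hx
        have h2 := FA_mem hy
        have := colB i₁ i₂ j hlt h1 h2
        rw [this] at hy
        rw [← Option.some_injective _ hy]
        rcases hvalcases hx with h | h <;> rw [h]
        · exact hAB
        · exact hrefl _
    · intro i₁ i₂ j hne12 hx hy
      have h1 := FA_mem hx
      have h2 := FA_mem hy
      rcases Nat.lt_or_ge i₁ i₂ with hlt | hge
      · rw [colB i₁ i₂ j hlt h1 h2] at hy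
        exact hABne (Option.some_injective _ hy).symm
      · have hlt : i₂ < i₁ := by omega
        rw [colB i₂ i₁ j hlt h2 h1] at hx
        exact hABne (Option.some_injective _ hx).symm
    · intro i j₁ j₂ hne12 hx hy
      have h1 := FA_mem hx
      have h2 := FA_mem hy
      rcases Nat.lt_or_ge j₁ j₂ with hlt | hge
      · rw [rowA i j₁ j₂ hlt h1 h2] at hx
        exact hABne (Option.some_injective _ hx)
      · have hlt : j₂ < j₁ := by omega
        rw [rowA i j₂ j₁ hlt h2 h1] at hy
        exact hABne (Option.some_injective _ hy)
  -- uniqueness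
  have uniq : ∀ f : Filling n,
      ((∀ c, (f c).isSome ↔ c ∈ D) ∧
      (∀ c ∈ D, f c = some (false, a) ∨ f c = some (true, b)) ∧
      (∀ i j₁ j₂ : ℕ, ∀ x y : Letter n, j₁ ≤ j₂ →
        f (i, j₁) = some x → f (i, j₂) = some y → r x y) ∧
      (∀ i₁ i₂ j : ℕ, ∀ x y : Letter n, i₁ ≤ i₂ →
        f (i₁, j) = some x → f (i₂, j) = some y → r x y) ∧
      (∀ i₁ i₂ j : ℕ, i₁ ≠ i₂ → f (i₁, j) = some (false, a) → f (i₂, j) ≠ some (false, a)) ∧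
      (∀ i j₁ j₂ : ℕ, j₁ ≠ j₂ → f (i, j₁) = some (true, b) → f (i, j₂) ≠ some (true, b))) →
      f = FA a b D (false, a) ∨ f = FA a b D (true, b) := by
    intro f hf
    obtain ⟨h1, h2, h3, h4, h5, h6⟩ := hf
    obtain ⟨v₀, hv₀⟩ := Option.isSome_iff_exists.1 ((h1 c₀).2 hc₀mem)
    have hv₀AB : v₀ = (false, a) ∨ v₀ = (true, b) := by
      rcases h2 c₀ hc₀mem with h | h <;> rw [hv₀] at h
      · exact Or.inl (Option.some_injective _ h)
      · exact Or.inr (Option.some_injective _ h)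
    have hfeq : f = FA a b D v₀ := by
      funext c'
      obtain ⟨i, j⟩ := c'
      by_cases hcm : (i, j) ∈ D
      · by_cases hR : (i, j + 1) ∈ D
        · have hfc : f (i, j) = some (false, a) := by
            rcases h2 (i, j) hcm with h | h
            · exact h
            · exfalso
              rcases h2 (i, j + 1) hR with h' | h'
              · exact hBA (h3 i j (j + 1) _ _ (Nat.le_succ _) h h')
              · exact h6 i j (j + 1) (by omega) h h'
          rw [hfc, FA_right hcm hR]
        · by_cases hU : 0 < i ∧ (i - 1, j) ∈ D
          · have hfc : f (i, j) = some (true, b) := by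
              rcases h2 (i, j) hcm with h | h
              swap
              · exact h
              exfalso
              rcases h2 (i - 1, j) hU.2 with h' | h'
              · exact h5 (i - 1) i j (by omega) h' h
              · exact hBA (h4 (i - 1) i j _ _ (by omega) h' h)
            rw [hfc, FA_up hcm hR hU.1 hU.2]
          · have : ((i, j) : ℕ × ℕ) = c₀ := funiq _ hcm ⟨hR, hU⟩
            rw [this, hv₀, FA_freecell hc₀mem hc₀free]
      · have : f (i, j) = none := by
          rw [← Option.not_isSome_iff_eq_none, h1]
          exact hcm
        rw [this, FA_none hcm]
    rcases hv₀AB with h | h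
    · left; rw [hfeq, h]
    · right; rw [hfeq, h]
  rw [Nat.card_eq_two_iff]
  refine ⟨⟨FA a b D (false, a), valid _ (Or.inl rfl)⟩, ⟨FA a b D (true, b), valid _ (Or.inr rfl)⟩,
    ?_, ?_⟩
  · intro h
    have hval : FA a b D ((false, a) : Letter n) = FA a b D (true, b) :=
      congrArg Subtype.val h
    have := congrFun hval c₀
    rw [FA_freecell hc₀mem hc₀free, FA_freecell hc₀mem hc₀free] at this
    exact hABne (Option.some_injective _ this)
  · rw [Set.eq_univ_iff_forall]
    rintro ⟨f, hf⟩
    rcases uniq f hf with h | h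
    · exact Or.inl (Subtype.ext h)
    · exact Or.inr (Subtype.ext h)

private def sB (S : Finset (ℕ × ℕ)) (c : ℕ × ℕ) : ℕ × ℕ :=
  if 0 < c.2 ∧ (c.1, c.2 - 1) ∈ S then (c.1, c.2 - 1)
  else if (c.1 + 1, c.2) ∈ S then (c.1 + 1, c.2) else c

private def FrB (S : Finset (ℕ × ℕ)) (c : ℕ × ℕ) : Prop :=
  ¬(0 < c.2 ∧ (c.1, c.2 - 1) ∈ S) ∧ (c.1 + 1, c.2) ∉ S

private lemma sB_free {S : Finset (ℕ × ℕ)} {c : ℕ × ℕ} (h : FrB S c) : sB S c = c := by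
  rw [sB, if_neg h.1, if_neg h.2]

private lemma sB_mem {S : Finset (ℕ × ℕ)} {c : ℕ × ℕ} (h : c ∈ S) : sB S c ∈ S := by
  rw [sB]; split_ifs with h1 h2
  · exact h1.2
  · exact h2
  · exact h

private lemma sB_phi {S : Finset (ℕ × ℕ)} {c : ℕ × ℕ} (h : c ∈ S) (hf : ¬ FrB S c) :
    ((sB S c).1 : ℤ) - (sB S c).2 = ((c.1 : ℤ) - c.2) + 1 := by
  rw [FrB] at hf; rw [sB]
  split_ifs with h1 h2
  · simp only []
    have : 0 < c.2 := h1.1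
    push_cast [Nat.cast_sub (by omega : 1 ≤ c.2)]
    ring
  · simp; ring
  · exact absurd ⟨h1, h2⟩ hf

private lemma sB_adj {S : Finset (ℕ × ℕ)}
    (hdown : ∀ i j : ℕ, (i, j) ∈ S → (i, j + 1) ∈ S → (i + 1, j + 1) ∈ S → False)
    (c d : ℕ × ℕ) (hc : c ∈ S) (hd : d ∈ S) (h : BoxAdj c d) :
    sB S c = d ∨ sB S d = c := by
  obtain ⟨i, j⟩ := c; obtain ⟨i', j'⟩ := d
  rcases h with ⟨h1, h2 | h2⟩ | ⟨h1, h2 | h2⟩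
  · -- c left of d : i = i', j + 1 = j'
    right
    simp only at h1 h2; subst h1; subst h2
    rw [sB, if_pos (by simp; exact hc)]
    simp
  · -- d left of c : j' + 1 = j
    left
    simp only at h1 h2; subst h1; subst h2
    rw [sB, if_pos (by simp; exact hd)]
    simp
  · -- d below c : j = j', i + 1 = i'
    left
    simp only at h1 h2; subst h1; subst h2
    have hnl : ¬(0 < j ∧ (i, j - 1) ∈ S) := by
      rintro ⟨hj, hl⟩
      have e : j - 1 + 1 = j := by omega
      exact hdown i (j - 1) hl (by rw [e]; exact hc) (by rw [e]; exact hd)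
    rw [sB, if_neg (by simpa using hnl), if_pos (by simpa using hd)]
  · -- c below d : i' + 1 = i
    right
    simp only at h1 h2; subst h1; subst h2
    have hnl : ¬(0 < j ∧ (i', j - 1) ∈ S) := by
      rintro ⟨hj, hl⟩
      have e : j - 1 + 1 = j := by omega
      exact hdown i' (j - 1) hl (by rw [e]; exact hd) (by rw [e]; exact hc)
    rw [sB, if_neg (by simpa using hnl), if_pos (by simpa using hc)]

private def FB {n : ℕ} (a b : Fin n) (S : Finset (ℕ × ℕ)) (v : Letter n) : Filling n :=
  fun c => if c ∈ S then
    some (if 0 < c.2 ∧ (c.1, c.2 - 1) ∈ S then ((false, a) : Letter n)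
      else if (c.1 + 1, c.2) ∈ S then (true, b) else v)
  else none

private lemma FB_none {n : ℕ} {a b : Fin n} {S : Finset (ℕ × ℕ)} {v : Letter n} {c : ℕ × ℕ}
    (h : c ∉ S) : FB a b S v c = none := by rw [FB]; exact if_neg h

private lemma FB_mem {n : ℕ} {a b : Fin n} {S : Finset (ℕ × ℕ)} {v : Letter n} {c : ℕ × ℕ}
    {x : Letter n} (h : FB a b S v c = some x) : c ∈ S := by
  by_contra hc; rw [FB_none hc] at h; exact nomatch h

private lemma FB_left {n : ℕ} {a b : Fin n} {S : Finset (ℕ × ℕ)} {v : Letter n} {c : ℕ × ℕ}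
    (h : c ∈ S) (h0 : 0 < c.2) (hl : (c.1, c.2 - 1) ∈ S) : FB a b S v c = some (false, a) := by
  rw [FB, if_pos h, if_pos ⟨h0, hl⟩]

private lemma FB_down {n : ℕ} {a b : Fin n} {S : Finset (ℕ × ℕ)} {v : Letter n} {c : ℕ × ℕ}
    (h : c ∈ S) (hl : ¬(0 < c.2 ∧ (c.1, c.2 - 1) ∈ S)) (hd : (c.1 + 1, c.2) ∈ S) :
    FB a b S v c = some (true, b) := by
  rw [FB, if_pos h, if_neg hl, if_pos hd]

private lemma FB_freecell {n : ℕ} {a b : Fin n} {S : Finset (ℕ × ℕ)} {v : Letter n} {c : ℕ × ℕ}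
    (h : c ∈ S) (hf : FrB S c) : FB a b S v c = some v := by
  rw [FB, if_pos h, if_neg hf.1, if_neg hf.2]

private lemma FB_cases {n : ℕ} {a b : Fin n} {S : Finset (ℕ × ℕ)} {v : Letter n} {c : ℕ × ℕ}
    {x : Letter n} (h : FB a b S v c = some x) :
    x = (false, a) ∨ x = (true, b) ∨ x = v := by
  have hc := FB_mem h
  rw [FB, if_pos hc] at h
  split_ifs at h with h1 h2
  · exact Or.inl (Option.some_injective _ h).symm
  · exact Or.inr (Or.inl (Option.some_injective _ h).symm)
  · exact Or.inr (Or.inr (Option.some_injective _ h).symm)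

private lemma FB_isSome {n : ℕ} {a b : Fin n} {S : Finset (ℕ × ℕ)} {v : Letter n} {c : ℕ × ℕ} :
    (FB a b S v c).isSome ↔ c ∈ S := by
  rw [FB]; split_ifs with h <;> simp [h]

private theorem caseB {n : ℕ} (r : Letter n → Letter n → Prop)
    (hr : IsLinExt r) (a b : Fin n) (hcov : CoveredBy r (true, b) (false, a))
    (D : Finset (ℕ × ℕ)) (hne : D.Nonempty)
    (hrow : ∀ i j₁ j j₂ : ℕ, (i, j₁) ∈ D → (i, j₂) ∈ D → j₁ ≤ j → j ≤ j₂ → (i, j) ∈ D)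
    (hcol : ∀ i₁ i i₂ j : ℕ, (i₁, j) ∈ D → (i₂, j) ∈ D → i₁ ≤ i → i ≤ i₂ → (i, j) ∈ D)
    (hdown : ∀ i j : ℕ, (i, j) ∈ D → (i, j + 1) ∈ D → (i + 1, j + 1) ∈ D → False)
    (hconn : ∀ c ∈ D, ∀ d ∈ D, ConnIn (↑D) c d) :
    Nat.card {f : Filling n //
      (∀ c, (f c).isSome ↔ c ∈ D) ∧
      (∀ c ∈ D, f c = some (false, a) ∨ f c = some (true, b)) ∧
      (∀ i j₁ j₂ : ℕ, ∀ x y : Letter n, j₁ ≤ j₂ →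
        f (i, j₁) = some x → f (i, j₂) = some y → r x y) ∧
      (∀ i₁ i₂ j : ℕ, ∀ x y : Letter n, i₁ ≤ i₂ →
        f (i₁, j) = some x → f (i₂, j) = some y → r x y) ∧
      (∀ i₁ i₂ j : ℕ, i₁ ≠ i₂ → f (i₁, j) = some (false, a) → f (i₂, j) ≠ some (false, a)) ∧
      (∀ i j₁ j₂ : ℕ, j₁ ≠ j₂ → f (i, j₁) = some (true, b) → f (i, j₂) ≠ some (true, b))} =
      2 := by
  haveI := hr.1
  have hBA : r (true, b) (false, a) := hcov.1
  have hABne : ((false, a) : Letter n) ≠ (true, b) := by simp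
  have hAB : ¬ r (false, a) (true, b) := fun h => hABne (antisymm h hBA)
  have hrefl : ∀ x : Letter n, r x x := fun x => refl_of r x
  -- the unique free cell
  set M : ℕ := D.sup Prod.fst + D.sup Prod.snd with hM
  set K : ℕ := 2 * M + 1 with hK
  have hbd : ∀ c ∈ D, -(M : ℤ) ≤ (c.1 : ℤ) - c.2 ∧ ((c.1 : ℤ) - c.2) ≤ M := by
    intro c hc
    have h1 : c.1 ≤ D.sup Prod.fst := Finset.le_sup (f := Prod.fst) hc
    have h2 : c.2 ≤ D.sup Prod.snd := Finset.le_sup (f := Prod.snd) hc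
    constructor <;> [skip; skip] <;> push_cast <;> omega
  have hiter : ∀ c ∈ D, (sB D)^[K] c ∈ D ∧ FrB D ((sB D)^[K] c) :=
    iter_free hbd (fun c hc => sB_mem hc) (fun c hf => sB_free hf)
      (fun c hc hf => sB_phi hc hf)
  obtain ⟨c, hc⟩ := hne
  obtain ⟨hc₀mem, hc₀free⟩ := hiter c hc
  set c₀ : ℕ × ℕ := (sB D)^[K] c with hc₀
  have funiq : ∀ d ∈ D, FrB D d → d = c₀ := fun d hd hfd =>
    free_unique hiter (fun _ hf => sB_free hf) (sB_adj hdown) hfd hc₀free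
      (hconn d hd c₀ hc₀mem)
  -- validity of the two candidate fillings
  have valid : ∀ v : Letter n, (v = (false, a) ∨ v = (true, b)) →
      (∀ c, (FB a b D v c).isSome ↔ c ∈ D) ∧
      (∀ c ∈ D, FB a b D v c = some (false, a) ∨ FB a b D v c = some (true, b)) ∧
      (∀ i j₁ j₂ : ℕ, ∀ x y : Letter n, j₁ ≤ j₂ →
        FB a b D v (i, j₁) = some x → FB a b D v (i, j₂) = some y → r x y) ∧
      (∀ i₁ i₂ j : ℕ, ∀ x y : Letter n, i₁ ≤ i₂ →
        FB a b D v (i₁, j) = some x → FB a b D v (i₂, j) = some y → r x y) ∧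
      (∀ i₁ i₂ j : ℕ, i₁ ≠ i₂ → FB a b D v (i₁, j) = some (false, a) →
        FB a b D v (i₂, j) ≠ some (false, a)) ∧
      (∀ i j₁ j₂ : ℕ, j₁ ≠ j₂ → FB a b D v (i, j₁) = some (true, b) →
        FB a b D v (i, j₂) ≠ some (true, b)) := by
    intro v hv
    have hvalcases : ∀ {c : ℕ × ℕ} {x : Letter n}, FB a b D v c = some x →
        x = (false, a) ∨ x = (true, b) := by
      intro c x h
      rcases FB_cases h with h' | h' | h'
      · exact Or.inl h'
      · exact Or.inr h'
      · rw [h']; exact hv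
    have rowA : ∀ i j₁ j₂ : ℕ, j₁ < j₂ → (i, j₁) ∈ D → (i, j₂) ∈ D →
        FB a b D v (i, j₂) = some (false, a) := by
      intro i j₁ j₂ hlt h1 h2
      exact FB_left h2 (by omega)
        (hrow i j₁ (j₂ - 1) j₂ h1 h2 (by omega) (by omega))
    have colB : ∀ i₁ i₂ j : ℕ, i₁ < i₂ → (i₁, j) ∈ D → (i₂, j) ∈ D →
        FB a b D v (i₁, j) = some (true, b) := by
      intro i₁ i₂ j hlt h1 h2
      have hdn : (i₁ + 1, j) ∈ D := hcol i₁ (i₁ + 1) i₂ j h1 h2 (Nat.le_succ _) (by omega)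
      have hnl : ¬(0 < j ∧ (i₁, j - 1) ∈ D) := by
        rintro ⟨hj, hl⟩
        have e : j - 1 + 1 = j := by omega
        exact hdown i₁ (j - 1) hl (by rw [e]; exact h1) (by rw [e]; exact hdn)
      exact FB_down h1 hnl hdn
    refine ⟨fun c => FB_isSome, ?_, ?_, ?_, ?_, ?_⟩
    · intro c hc'
      rcases hvalcases (x := (FB a b D v c).get (FB_isSome.2 hc'))
          (Option.eq_some_of_isSome (FB_isSome.2 hc')) with h | h
      · left; rw [Option.eq_some_of_isSome (FB_isSome.2 hc'), h]
      · right; rw [Option.eq_some_of_isSome (FB_isSome.2 hc'), h]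
    · intro i j₁ j₂ x y hle hx hy
      rcases eq_or_lt_of_le hle with rfl | hlt
      · rw [hx] at hy
        rw [Option.some_injective _ hy]; exact hrefl y
      · have h1 := FB_mem hx
        have h2 := FB_mem hy
        have := rowA i j₁ j₂ hlt h1 h2
        rw [this] at hy
        rw [← Option.some_injective _ hy]
        rcases hvalcases hx with h | h <;> rw [h]
        · exact hrefl _
        · exact hBA
    · intro i₁ i₂ j x y hle hx hy
      rcases eq_or_lt_of_le hle with rfl | hlt
      · rw [hx] at hy
        rw [Option.some_injective _ hy]; exact hrefl y
      · have h1 := FB_mem hx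
        have h2 := FB_mem hy
        have := colB i₁ i₂ j hlt h1 h2
        rw [this] at hx
        rw [← Option.some_injective _ hx]
        rcases hvalcases hy with h | h <;> rw [h]
        · exact hBA
        · exact hrefl _
    · intro i₁ i₂ j hne12 hx hy
      have h1 := FB_mem hx
      have h2 := FB_mem hy
      rcases Nat.lt_or_ge i₁ i₂ with hlt | hge
      · rw [colB i₁ i₂ j hlt h1 h2] at hx
        exact hABne (Option.some_injective _ hx).symm
      · have hlt : i₂ < i₁ := by omega
        rw [colB i₂ i₁ j hlt h2 h1] at hy
        exact hABne (Option.some_injective _ hy).symm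
    · intro i j₁ j₂ hne12 hx hy
      have h1 := FB_mem hx
      have h2 := FB_mem hy
      rcases Nat.lt_or_ge j₁ j₂ with hlt | hge
      · rw [rowA i j₁ j₂ hlt h1 h2] at hy
        exact hABne (Option.some_injective _ hy)
      · have hlt : j₂ < j₁ := by omega
        rw [rowA i j₂ j₁ hlt h2 h1] at hx
        exact hABne (Option.some_injective _ hx)
  -- uniqueness
  have uniq : ∀ f : Filling n,
      ((∀ c, (f c).isSome ↔ c ∈ D) ∧
      (∀ c ∈ D, f c = some (false, a) ∨ f c = some (true, b)) ∧
      (∀ i j₁ j₂ : ℕ, ∀ x y : Letter n, j₁ ≤ j₂ →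
        f (i, j₁) = some x → f (i, j₂) = some y → r x y) ∧
      (∀ i₁ i₂ j : ℕ, ∀ x y : Letter n, i₁ ≤ i₂ →
        f (i₁, j) = some x → f (i₂, j) = some y → r x y) ∧
      (∀ i₁ i₂ j : ℕ, i₁ ≠ i₂ → f (i₁, j) = some (false, a) → f (i₂, j) ≠ some (false, a)) ∧
      (∀ i j₁ j₂ : ℕ, j₁ ≠ j₂ → f (i, j₁) = some (true, b) → f (i, j₂) ≠ some (true, b))) →
      f = FB a b D (false, a) ∨ f = FB a b D (true, b) := by
    intro f hf
    obtain ⟨h1, h2, h3, h4, h5, h6⟩ := hf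
    obtain ⟨v₀, hv₀⟩ := Option.isSome_iff_exists.1 ((h1 c₀).2 hc₀mem)
    have hv₀AB : v₀ = (false, a) ∨ v₀ = (true, b) := by
      rcases h2 c₀ hc₀mem with h | h <;> rw [hv₀] at h
      · exact Or.inl (Option.some_injective _ h)
      · exact Or.inr (Option.some_injective _ h)
    have hfeq : f = FB a b D v₀ := by
      funext c'
      obtain ⟨i, j⟩ := c'
      by_cases hcm : (i, j) ∈ D
      · by_cases hL : 0 < j ∧ (i, j - 1) ∈ D
        · have hfc : f (i, j) = some (false, a) := by
            rcases h2 (i, j) hcm with h | h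
            · exact h
            · exfalso
              have e : j - 1 + 1 = j := by omega
              rcases h2 (i, j - 1) hL.2 with h' | h'
              · exact hAB (h3 i (j - 1) j _ _ (by omega) h' h)
              · exact h6 i (j - 1) j (by omega) h' h
          rw [hfc, FB_left hcm hL.1 hL.2]
        · by_cases hDn : (i + 1, j) ∈ D
          · have hfc : f (i, j) = some (true, b) := by
              rcases h2 (i, j) hcm with h | h
              swap
              · exact h
              exfalso
              rcases h2 (i + 1, j) hDn with h' | h'
              · exact h5 i (i + 1) j (by omega) h h'
              · exact hAB (h4 i (i + 1) j _ _ (Nat.le_succ _) h h')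
            rw [hfc, FB_down hcm hL hDn]
          · have : ((i, j) : ℕ × ℕ) = c₀ := funiq _ hcm ⟨hL, hDn⟩
            rw [this, hv₀, FB_freecell hc₀mem hc₀free]
      · have : f (i, j) = none := by
          rw [← Option.not_isSome_iff_eq_none, h1]
          exact hcm
        rw [this, FB_none hcm]
    rcases hv₀AB with h | h
    · left; rw [hfeq, h]
    · right; rw [hfeq, h]
  rw [Nat.card_eq_two_iff]
  refine ⟨⟨FB a b D (false, a), valid _ (Or.inl rfl)⟩, ⟨FB a b D (true, b), valid _ (Or.inr rfl)⟩,
    ?_, ?_⟩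
  · intro h
    have hval : FB a b D ((false, a) : Letter n) = FB a b D (true, b) :=
      congrArg Subtype.val h
    have := congrFun hval c₀
    rw [FB_freecell hc₀mem hc₀free, FB_freecell hc₀mem hc₀free] at this
    exact hABne (Option.some_injective _ this)
  · rw [Set.eq_univ_iff_forall]
    rintro ⟨f, hf⟩
    rcases uniq f hf with h | h
    · exact Or.inl (Subtype.ext h)
    · exact Or.inr (Subtype.ext h)

/-- A nonempty edge-connected ribbon `D` admits exactly two fillings by the
letters `a` and `b̄` (where `a` and `b̄` are adjacent in the total order `r`) with weakly
increasing rows and columns, no two `a`'s in a column and no two `b̄`'s in a row. -/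
theorem connected_ribbon_two_fillings {n : ℕ} (r : Letter n → Letter n → Prop)
    (hr : IsLinExt r) (a b : Fin n) (hadj : AdjacentIn r (false, a) (true, b))
    (D : Finset (ℕ × ℕ)) (hne : D.Nonempty)
    (hskew : ∃ κ μ : YoungDiagram, κ ≤ μ ∧ D = μ.cells \ κ.cells)
    (hribbon : ∀ i j : ℕ,
      ¬((i, j) ∈ D ∧ (i + 1, j) ∈ D ∧ (i, j + 1) ∈ D ∧ (i + 1, j + 1) ∈ D))
    (hconn : ∀ c ∈ D, ∀ d ∈ D, ConnIn (↑D) c d) :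
    Nat.card {f : Filling n //
      (∀ c, (f c).isSome ↔ c ∈ D) ∧
      (∀ c ∈ D, f c = some (false, a) ∨ f c = some (true, b)) ∧
      (∀ i j₁ j₂ : ℕ, ∀ x y : Letter n, j₁ ≤ j₂ →
        f (i, j₁) = some x → f (i, j₂) = some y → r x y) ∧
      (∀ i₁ i₂ j : ℕ, ∀ x y : Letter n, i₁ ≤ i₂ →
        f (i₁, j) = some x → f (i₂, j) = some y → r x y) ∧
      (∀ i₁ i₂ j : ℕ, i₁ ≠ i₂ → f (i₁, j) = some (false, a) → f (i₂, j) ≠ some (false, a)) ∧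
      (∀ i j₁ j₂ : ℕ, j₁ ≠ j₂ → f (i, j₁) = some (true, b) → f (i, j₂) ≠ some (true, b))} =
      2 := by
  obtain ⟨κ, μ, hκμ, hD⟩ := hskew
  have hmemD : ∀ c : ℕ × ℕ, c ∈ D ↔ c ∈ μ ∧ c ∉ κ := by
    intro c; rw [hD, Finset.mem_sdiff, YoungDiagram.mem_cells, YoungDiagram.mem_cells]
  have hrow : ∀ i j₁ j j₂ : ℕ, (i, j₁) ∈ D → (i, j₂) ∈ D → j₁ ≤ j → j ≤ j₂ → (i, j) ∈ D := by
    intro i j₁ j j₂ h1 h2 hle1 hle2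
    rw [hmemD] at h1 h2 ⊢
    exact ⟨μ.up_left_mem le_rfl hle2 h2.1, fun hk => h1.2 (κ.up_left_mem le_rfl hle1 hk)⟩
  have hcol : ∀ i₁ i i₂ j : ℕ, (i₁, j) ∈ D → (i₂, j) ∈ D → i₁ ≤ i → i ≤ i₂ → (i, j) ∈ D := by
    intro i₁ i i₂ j h1 h2 hle1 hle2
    rw [hmemD] at h1 h2 ⊢
    exact ⟨μ.up_left_mem hle2 le_rfl h2.1, fun hk => h1.2 (κ.up_left_mem hle1 le_rfl hk)⟩
  have hup : ∀ i j : ℕ, (i + 1, j) ∈ D → (i + 1, j + 1) ∈ D → (i, j) ∈ D → False := by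
    intro i j h1 h2 h3
    have h4 : (i, j + 1) ∈ D := by
      rw [hmemD] at h2 h3 ⊢
      exact ⟨μ.up_left_mem (Nat.le_succ _) le_rfl h2.1,
        fun hk => h3.2 (κ.up_left_mem le_rfl (Nat.le_succ _) hk)⟩
    exact hribbon i j ⟨h3, h1, h4, h2⟩
  have hdown : ∀ i j : ℕ, (i, j) ∈ D → (i, j + 1) ∈ D → (i + 1, j + 1) ∈ D → False := by
    intro i j h1 h2 h3
    have h4 : (i + 1, j) ∈ D := by
      rw [hmemD] at h1 h3 ⊢
      exact ⟨μ.up_left_mem le_rfl (Nat.le_succ _) h3.1,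
        fun hk => h1.2 (κ.up_left_mem (Nat.le_succ _) le_rfl hk)⟩
    exact hribbon i j ⟨h1, h4, h2, h3⟩
  rcases hadj with hcov | hcov
  · exact caseA r hr a b hcov D hne hrow hcol hup hconn
  · exact caseB r hr a b hcov D hne hrow hcol hdown hconn
end

section
/- Let ≺ be a total order on 𝒜ₙ in which an unbarred letter a and a barred letter b̄ are adjacent. Suppose T and T′ are colored tableaux with respect to ≺ of the same shape such that T and T′ agree on every box not containing a or b̄, the set S of boxes containing a or b̄ is the same in T and T′, and in each edge-connected component of S the tableaux T and T′ contain the same number of a's. Then T = T′. -/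
open scoped Classical

private lemma convIterStable {α : Type*} (step : α → α) (S : Set α)
    (hstepS : ∀ e ∈ S, step e ∈ S)
    (m : α → ℕ) (hdec : ∀ e ∈ S, step e ≠ e → m (step e) < m e) :
    ∀ k, ∀ e ∈ S, m e < k → step (step^[k] e) = step^[k] e := by
  intro k
  induction k with
  | zero => intro e _ h; omega
  | succ k ih =>
    intro e he h
    by_cases hfe : step e = e
    · rw [Function.iterate_fixed hfe]; exact hfe
    · rw [Function.iterate_succ_apply]
      exact ih (step e) (hstepS e he) (by have := hdec e he hfe; omega)

private lemma convKey {n : ℕ} (A B : Letter n) (hAB : A ≠ B) (S : Set (ℕ × ℕ))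
    (hSfin : S.Finite) (T T' : Filling n)
    (hTS : ∀ c ∈ S, T c = some A ∨ T c = some B)
    (hT'S : ∀ c ∈ S, T' c = some A ∨ T' c = some B)
    (step : ℕ × ℕ → ℕ × ℕ)
    (hstepS : ∀ e ∈ S, step e ∈ S)
    (m : ℕ × ℕ → ℕ) (hdec : ∀ e ∈ S, step e ≠ e → m (step e) < m e)
    (hadjstep : ∀ e ∈ S, ∀ e' ∈ S, BoxAdj e e' → step e = e' ∨ step e' = e)
    (hforce : ∀ e ∈ S, step e ≠ e → T e = T' e)
    (hcount : ∀ c ∈ S,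
      {d | ConnIn S c d ∧ T d = some A}.ncard = {d | ConnIn S c d ∧ T' d = some A}.ncard) :
    ∀ c ∈ S, T c = T' c := by
  classical
  set M := hSfin.toFinset.sup m + 1 with hM
  have hMb : ∀ e ∈ S, m e < M :=
    fun e he => Nat.lt_succ_of_le (Finset.le_sup (hSfin.mem_toFinset.mpr he))
  have hfix : ∀ e ∈ S, step (step^[M] e) = step^[M] e :=
    fun e he => convIterStable step S hstepS m hdec M e he (hMb e he)
  have hgstep : ∀ e ∈ S, step^[M] (step e) = step^[M] e := by
    intro e he
    rw [← Function.iterate_succ_apply, Function.iterate_succ_apply']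
    exact hfix e he
  have hadjg : ∀ e ∈ S, ∀ e' ∈ S, BoxAdj e e' → step^[M] e = step^[M] e' := by
    intro e he e' he' hadj
    rcases hadjstep e he e' he' hadj with h | h
    · rw [← h, hgstep e he]
    · rw [← h, hgstep e' he']
  have hconnS : ∀ c d, c ∈ S → ConnIn S c d → d ∈ S := by
    intro c d hc h
    induction h with
    | refl => exact hc
    | tail _ hstep ih => exact hstep.2.1
  have hconng : ∀ c d, c ∈ S → ConnIn S c d → step^[M] c = step^[M] d := by
    intro c d hc h
    induction h with
    | refl => rfl
    | tail _ hstep ih => exact ih.trans (hadjg _ hstep.1 _ hstep.2.1 hstep.2.2)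
  intro c hc
  by_cases hfree : step c = c
  swap
  · exact hforce c hc hfree
  · have hTc := hTS c hc
    have hT'c := hT'S c hc
    have hdet : ∀ d, ConnIn S c d → d ≠ c → T d = T' d := by
      intro d hconn hdc
      have hd : d ∈ S := hconnS c d hc hconn
      by_cases hfd : step d = d
      · exfalso; apply hdc
        have h1 : step^[M] c = c := Function.iterate_fixed hfree M
        have h2 : step^[M] d = d := Function.iterate_fixed hfd M
        rw [← h2, ← hconng c d hc hconn, h1]
      · exact hforce d hd hfd
    have hcountc := hcount c hc
    set U := {d | ConnIn S c d ∧ T d = some A} with hU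
    set V := {d | ConnIn S c d ∧ T' d = some A} with hVdef
    have hUfin : U.Finite := hSfin.subset (fun d hd => hconnS c d hc hd.1)
    have hVfin : V.Finite := hSfin.subset (fun d hd => hconnS c d hc hd.1)
    have hrefl : ConnIn S c c := Relation.ReflTransGen.refl
    rcases hTc with h1 | h1 <;> rcases hT'c with h2 | h2
    · exact h1.trans h2.symm
    · -- T c = A, T' c = B
      exfalso
      have hV : V = U \ {c} := by
        ext d
        simp only [hU, hVdef, Set.mem_setOf_eq, Set.mem_diff, Set.mem_singleton_iff]
        constructor
        · rintro ⟨hcd, hTd⟩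
          have hdc : d ≠ c := by
            rintro rfl
            rw [h2] at hTd
            exact hAB (Option.some.inj hTd).symm
          refine ⟨⟨hcd, ?_⟩, hdc⟩
          rw [hdet d hcd hdc]; exact hTd
        · rintro ⟨⟨hcd, hTd⟩, hdc⟩
          refine ⟨hcd, ?_⟩
          rw [← hdet d hcd hdc]; exact hTd
      have hcU : c ∈ U := ⟨hrefl, h1⟩
      rw [hV] at hcountc
      have := Set.ncard_diff_singleton_add_one hcU hUfin
      omega
    · -- T c = B, T' c = A
      exfalso
      have hUeq : U = V \ {c} := by
        ext d
        simp only [hU, hVdef, Set.mem_setOf_eq, Set.mem_diff, Set.mem_singleton_iff]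
        constructor
        · rintro ⟨hcd, hTd⟩
          have hdc : d ≠ c := by
            rintro rfl
            rw [h1] at hTd
            exact hAB (Option.some.inj hTd).symm
          refine ⟨⟨hcd, ?_⟩, hdc⟩
          rw [← hdet d hcd hdc]; exact hTd
        · rintro ⟨⟨hcd, hTd⟩, hdc⟩
          refine ⟨hcd, ?_⟩
          rw [hdet d hcd hdc]; exact hTd
      have hcV : c ∈ V := ⟨hrefl, h2⟩
      rw [hUeq] at hcountc
      have := Set.ncard_diff_singleton_add_one hcV hVfin
      omega
    · exact h1.trans h2.symm

/-- If `a` and `b̄` are adjacent in the total order `r`, and `T`, `T'` are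
colored tableaux of the same shape w.r.t. `r` that agree outside the set `S` of boxes
containing `a` or `b̄`, have the same such set `S`, and the same number of `a`'s in each
edge-connected component of `S`, then `T = T'`. -/
theorem colored_tableau_determined_by_component_counts {n : ℕ}
    (r : Letter n → Letter n → Prop) (hr : IsLinExt r) (a b : Fin n)
    (hadj : AdjacentIn r (false, a) (true, b)) (sh : YoungDiagram) (T T' : Filling n)
    (hT : IsColoredTableau r sh T) (hT' : IsColoredTableau r sh T')
    (hswitch : TableauSwitch a b T T') : T = T' := by
  classical
  obtain ⟨hout, hsame, hcnt⟩ := hswitch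
  set S : Set (ℕ × ℕ) := {c | T c = some (false, a) ∨ T c = some (true, b)} with hSdef
  have hanti : ∀ x y : Letter n, r x y → r y x → x = y := fun x y hxy hyx =>
    hr.1.toIsPartialOrder.toAntisymm.antisymm x y hxy hyx
  have hABne : ((false, a) : Letter n) ≠ (true, b) := by simp
  have hSfin : S.Finite := by
    apply Set.Finite.subset sh.cells.finite_toSet
    intro e he
    have he' : T e = some (false, a) ∨ T e = some (true, b) := he
    have h1 : (T e).isSome := by rcases he' with h | h <;> simp [h]
    simpa [YoungDiagram.mem_cells] using (hT.1 e).mp h1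
  set J := hSfin.toFinset.sup (fun e => e.2) with hJdef
  set I := hSfin.toFinset.sup (fun e => e.1) with hIdef
  have hJb : ∀ e ∈ S, e.2 ≤ J := fun e he =>
    Finset.le_sup (f := fun e => e.2) (hSfin.mem_toFinset.mpr he)
  have hIb : ∀ e ∈ S, e.1 ≤ I := fun e he =>
    Finset.le_sup (f := fun e => e.1) (hSfin.mem_toFinset.mpr he)
  have hTS : ∀ c ∈ S, T c = some (false, a) ∨ T c = some (true, b) := fun c hc => hc
  have hT'S : ∀ c ∈ S, T' c = some (false, a) ∨ T' c = some (true, b) :=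
    fun c hc => (hsame c).mp hc
  have hcount : ∀ c ∈ S,
      {d | ConnIn S c d ∧ T d = some (false, a)}.ncard =
      {d | ConnIn S c d ∧ T' d = some (false, a)}.ncard := fun c hc => hcnt c hc
  rcases hr.1.toTotal.total ((false, a) : Letter n) (true, b) with hd | hd
  · -- a below b̄
    have frc1 : ∀ (U : Filling n), IsColoredTableau r sh U →
        (∀ c ∈ S, U c = some (false, a) ∨ U c = some (true, b)) →
        (∀ e ∈ S, (e.1, e.2 + 1) ∈ S → U e = some (false, a)) ∧
        (∀ e ∈ S, e.1 ≠ 0 → (e.1 - 1, e.2) ∈ S → U e = some (true, b)) := by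
      intro U hU hUS
      obtain ⟨hUdom, hUrow, hUcol, hUcolU, hUrowB⟩ := hU
      constructor
      · rintro ⟨i, j⟩ he hre
        rcases hUS (i, j) he with h | h
        · exact h
        · exfalso
          rcases hUS (i, j + 1) hre with h' | h'
          · exact hABne (hanti _ _ hd (hUrow i j (j + 1) _ _ (Nat.le_succ j) h h'))
          · exact hUrowB i j (j + 1) b (by omega) h h'
      · rintro ⟨i, j⟩ he hi0 hue
        rcases hUS (i, j) he with h | h
        · exfalso
          rcases hUS (i - 1, j) hue with h' | h'
          · exact hUcolU (i - 1) i j a (by omega) h' h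
          · exact hABne (hanti _ _ hd (hUcol (i - 1) i j _ _ (by omega) h' h))
        · exact h
    have frcT := frc1 T hT hTS
    have frcT' := frc1 T' hT' hT'S
    set stp : ℕ × ℕ → ℕ × ℕ := fun e =>
      if (e.1, e.2 + 1) ∈ S then (e.1, e.2 + 1)
      else if e.1 ≠ 0 ∧ (e.1 - 1, e.2) ∈ S then (e.1 - 1, e.2) else e with hstp
    have hstepS : ∀ e ∈ S, stp e ∈ S := by
      intro e he
      rw [hstp]; dsimp only
      split_ifs with h1 h2
      · exact h1
      · exact h2.2
      · exact he
    have hnoboth : ∀ e ∈ S, (e.1, e.2 + 1) ∈ S → e.1 ≠ 0 → (e.1 - 1, e.2) ∈ S → False := by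
      intro e he h1 h2 h3
      have ha := frcT.1 e he h1
      have hb := frcT.2 e he h2 h3
      rw [ha] at hb
      exact hABne (Option.some.inj hb)
    have hdec : ∀ e ∈ S, stp e ≠ e →
        (fun e => e.1 * (J + 1) + (J - e.2)) (stp e) <
        (fun e => e.1 * (J + 1) + (J - e.2)) e := by
      intro e he hne
      rw [hstp] at hne ⊢
      dsimp only at hne ⊢
      split_ifs at hne ⊢ with h1 h2
      · have hj : e.2 + 1 ≤ J := hJb _ h1
        exact Nat.add_lt_add_left (by omega) _
      · have h20 : e.1 ≠ 0 := h2.1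
        exact Nat.add_lt_add_right
          ((Nat.mul_lt_mul_right (by omega : (0:ℕ) < J + 1)).mpr (by omega : e.1 - 1 < e.1)) _
      · exact absurd rfl hne
    have hadjstep : ∀ e ∈ S, ∀ e' ∈ S, BoxAdj e e' → stp e = e' ∨ stp e' = e := by
      rintro ⟨i, j⟩ he ⟨i', j'⟩ he' hbadj
      rcases hbadj with ⟨h1, h2 | h2⟩ | ⟨h1, h2 | h2⟩ <;>
        dsimp only at h1 h2 <;> subst h1 <;> subst h2
      · left
        rw [hstp]; dsimp only
        rw [if_pos he']
      · right
        rw [hstp]; dsimp only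
        rw [if_pos he]
      · right
        rw [hstp]; dsimp only
        have hrs : ((i + 1 : ℕ), (j + 1 : ℕ)) ∉ S := by
          intro hmem
          exact hnoboth (i + 1, j) he' hmem (by omega) he
        rw [if_neg hrs, if_pos ⟨by omega, he⟩]
        simp
      · left
        rw [hstp]; dsimp only
        have hrs : ((i' + 1 : ℕ), (j + 1 : ℕ)) ∉ S := by
          intro hmem
          exact hnoboth (i' + 1, j) he hmem (by omega) he'
        rw [if_neg hrs, if_pos ⟨by omega, he'⟩]
        simp
    have hforce : ∀ e ∈ S, stp e ≠ e → T e = T' e := by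
      intro e he hne
      by_cases hrs : (e.1, e.2 + 1) ∈ S
      · rw [frcT.1 e he hrs, frcT'.1 e he hrs]
      · by_cases hus : e.1 ≠ 0 ∧ (e.1 - 1, e.2) ∈ S
        · rw [frcT.2 e he hus.1 hus.2, frcT'.2 e he hus.1 hus.2]
        · exfalso; apply hne
          rw [hstp]; dsimp only
          rw [if_neg hrs, if_neg hus]
    have hkey := convKey (false, a) (true, b) hABne S hSfin T T' hTS hT'S stp hstepS
      (fun e => e.1 * (J + 1) + (J - e.2)) hdec hadjstep hforce hcount
    funext c
    by_cases hc : c ∈ S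
    · exact hkey c hc
    · exact (hout c hc).symm
  · -- b̄ below a
    have frc2 : ∀ (U : Filling n), IsColoredTableau r sh U →
        (∀ c ∈ S, U c = some (false, a) ∨ U c = some (true, b)) →
        (∀ e ∈ S, e.2 ≠ 0 → (e.1, e.2 - 1) ∈ S → U e = some (false, a)) ∧
        (∀ e ∈ S, (e.1 + 1, e.2) ∈ S → U e = some (true, b)) := by
      intro U hU hUS
      obtain ⟨hUdom, hUrow, hUcol, hUcolU, hUrowB⟩ := hU
      constructor
      · rintro ⟨i, j⟩ he hj0 hle
        rcases hUS (i, j) he with h | h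
        · exact h
        · exfalso
          rcases hUS (i, j - 1) hle with h' | h'
          · exact hABne (hanti _ _ (hUrow i (j - 1) j _ _ (by omega) h' h) hd)
          · exact hUrowB i (j - 1) j b (by omega) h' h
      · rintro ⟨i, j⟩ he hbe
        rcases hUS (i, j) he with h | h
        · exfalso
          rcases hUS (i + 1, j) hbe with h' | h'
          · exact hUcolU i (i + 1) j a (by omega) h h'
          · exact hABne (hanti _ _ (hUcol i (i + 1) j _ _ (by omega) h h') hd)
        · exact h
    have frcT := frc2 T hT hTS
    have frcT' := frc2 T' hT' hT'S
    set stp : ℕ × ℕ → ℕ × ℕ := fun e =>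
      if e.2 ≠ 0 ∧ (e.1, e.2 - 1) ∈ S then (e.1, e.2 - 1)
      else if (e.1 + 1, e.2) ∈ S then (e.1 + 1, e.2) else e with hstp
    have hstepS : ∀ e ∈ S, stp e ∈ S := by
      intro e he
      rw [hstp]; dsimp only
      split_ifs with h1 h2
      · exact h1.2
      · exact h2
      · exact he
    have hnoboth : ∀ e ∈ S, e.2 ≠ 0 → (e.1, e.2 - 1) ∈ S → (e.1 + 1, e.2) ∈ S → False := by
      intro e he h1 h2 h3
      have ha := frcT.1 e he h1 h2
      have hb := frcT.2 e he h3
      rw [ha] at hb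
      exact hABne (Option.some.inj hb)
    have hdec : ∀ e ∈ S, stp e ≠ e →
        (fun e => (I + 1 - e.1) * (J + 1) + e.2) (stp e) <
        (fun e => (I + 1 - e.1) * (J + 1) + e.2) e := by
      intro e he hne
      rw [hstp] at hne ⊢
      dsimp only at hne ⊢
      split_ifs at hne ⊢ with h1 h2
      · have h10 : e.2 ≠ 0 := h1.1
        exact Nat.add_lt_add_left (by omega) _
      · have hi : e.1 ≤ I := hIb _ he
        exact Nat.add_lt_add_right
          ((Nat.mul_lt_mul_right (by omega : (0:ℕ) < J + 1)).mpr
            (by omega : I + 1 - (e.1 + 1) < I + 1 - e.1)) _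
      · exact absurd rfl hne
    have hadjstep : ∀ e ∈ S, ∀ e' ∈ S, BoxAdj e e' → stp e = e' ∨ stp e' = e := by
      rintro ⟨i, j⟩ he ⟨i', j'⟩ he' hbadj
      rcases hbadj with ⟨h1, h2 | h2⟩ | ⟨h1, h2 | h2⟩ <;>
        dsimp only at h1 h2 <;> subst h1 <;> subst h2
      · right
        rw [hstp]; dsimp only
        rw [if_pos ⟨by omega, he⟩]
        simp
      · left
        rw [hstp]; dsimp only
        rw [if_pos ⟨by omega, he'⟩]
        simp
      · left
        rw [hstp]; dsimp only
        have hls : ¬((j : ℕ) ≠ 0 ∧ ((i : ℕ), (j - 1 : ℕ)) ∈ S) := by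
          rintro ⟨hj0, hmem⟩
          exact hnoboth (i, j) he hj0 hmem he'
        rw [if_neg hls, if_pos he']
      · right
        rw [hstp]; dsimp only
        have hls : ¬((j : ℕ) ≠ 0 ∧ ((i' : ℕ), (j - 1 : ℕ)) ∈ S) := by
          rintro ⟨hj0, hmem⟩
          exact hnoboth (i', j) he' hj0 hmem he
        rw [if_neg hls, if_pos he]
    have hforce : ∀ e ∈ S, stp e ≠ e → T e = T' e := by
      intro e he hne
      by_cases hls : e.2 ≠ 0 ∧ (e.1, e.2 - 1) ∈ S
      · rw [frcT.1 e he hls.1 hls.2, frcT'.1 e he hls.1 hls.2]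
      · by_cases hbs : (e.1 + 1, e.2) ∈ S
        · rw [frcT.2 e he hbs, frcT'.2 e he hbs]
        · exfalso; apply hne
          rw [hstp]; dsimp only
          rw [if_neg hls, if_neg hbs]
    have hkey := convKey (false, a) (true, b) hABne S hSfin T T' hTS hT'S stp hstepS
      (fun e => (I + 1 - e.1) * (J + 1) + e.2) hdec hadjstep hforce hcount
    funext c
    by_cases hc : c ∈ S
    · exact hkey c hc
    · exact (hout c hc).symm
end

section
/- Let < and ≺ be total orders on 𝒜ₙ that are both unbarred-tight, and let T (a colored tableau with respect to <) and T′ (a colored tableau with respect to ≺) be related by a single conversion switch. Then the unbarred reverse reading word u(T) is a ballot sequence if and only if u(T′) is a ballot sequence. -/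
open scoped Classical

namespace ConvSwitch

variable {n : ℕ} {r r' : Letter n → Letter n → Prop} {a b : Fin n}

lemma lin_refl (hr : IsLinExt r) (x : Letter n) : r x x := by
  haveI := hr.1; exact refl_of r x

lemma lin_trans (hr : IsLinExt r) {x y z : Letter n} (h1 : r x y) (h2 : r y z) : r x z := by
  haveI := hr.1; exact _root_.trans_of r h1 h2

lemma lin_antisymm (hr : IsLinExt r) {x y : Letter n} (h1 : r x y) (h2 : r y x) : x = y := by
  haveI := hr.1; exact _root_.antisymm h1 h2

lemma lin_total (hr : IsLinExt r) (x y : Letter n) : r x y ∨ r y x := by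
  haveI := hr.1; exact total_of r x y

lemma unb_le (hr : IsLinExt r) {i j : Fin n} : r (false, i) (false, j) ↔ i ≤ j := by
  constructor
  · intro h
    by_contra hn
    push_neg at hn
    have h2 := hr.2 false j i (le_of_lt hn)
    have heq := lin_antisymm hr h h2
    rw [Prod.mk.injEq] at heq
    exact absurd heq.2 (ne_of_lt hn).symm
  · exact fun h => hr.2 false i j h

lemma not_r_vb_va (hr : IsLinExt r) (hc : CoveredBy r (false, a) (true, b)) :
    ¬ r (true, b) (false, a) := by
  intro h
  have := lin_antisymm hr hc.1 h
  simp at this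

lemma not_r'_va_vb (hr' : IsLinExt r') (hc' : CoveredBy r' (true, b) (false, a)) :
    ¬ r' (false, a) (true, b) := by
  intro h
  have := lin_antisymm hr' hc'.1 h
  simp at this

lemma vb_lt_succ (hr : IsLinExt r) (hc : CoveredBy r (false, a) (true, b))
    (h : a.val + 1 < n) : r (true, b) (false, ⟨a.val + 1, h⟩) := by
  rcases lin_total hr (true, b) (false, ⟨a.val + 1, h⟩) with h1 | h1
  · exact h1
  · have hx : r (false, a) (false, ⟨a.val + 1, h⟩) :=
      (unb_le hr).2 (by rw [Fin.le_def]; simp)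
    rcases hc.2.2 _ hx h1 with h2 | h2
    · exfalso
      have := congrArg (fun p : Letter n => p.2.val) h2
      simp at this
    · exfalso; simp at h2

lemma pred_lt_vb (hr' : IsLinExt r') (hc' : CoveredBy r' (true, b) (false, a))
    (h0 : 0 < a.val) (hlt : a.val - 1 < n) : r' (false, ⟨a.val - 1, hlt⟩) (true, b) := by
  rcases lin_total hr' (false, ⟨a.val - 1, hlt⟩) (true, b) with h1 | h1
  · exact h1
  · have hx : r' (false, ⟨a.val - 1, hlt⟩) (false, a) :=
      (unb_le hr').2 (by rw [Fin.le_def]; simp)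
    rcases hc'.2.2 _ h1 hx with h2 | h2
    · exfalso; simp at h2
    · exfalso
      have := congrArg (fun p : Letter n => p.2.val) h2
      simp at this
      omega

lemma succ_le (hr : IsLinExt r) (hc : CoveredBy r (false, a) (true, b))
    (hut : UnbarredTight r) (h : a.val + 1 < n) {z : Letter n}
    (h1 : r (false, a) z) (h2 : z ≠ (false, a)) (h3 : z ≠ (true, b)) :
    r (false, ⟨a.val + 1, h⟩) z := by
  obtain ⟨zb, zi⟩ := z
  cases zb
  · have hle : a ≤ zi := (unb_le hr).1 h1
    have hne : a ≠ zi := fun he => h2 (by rw [he])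
    refine (unb_le hr).2 ?_
    have : a < zi := hle.lt_of_ne hne
    rw [Fin.lt_def] at this
    rw [Fin.le_def]; simpa using this
  · rcases lin_total hr (false, ⟨a.val + 1, h⟩) (true, zi) with h4 | h4
    · exact h4
    · exfalso
      have ha : (⟨a.val, Nat.lt_of_succ_lt h⟩ : Fin n) = a := Fin.eta a _
      have hb1 : Between r (false, ⟨a.val, Nat.lt_of_succ_lt h⟩) (false, ⟨a.val + 1, h⟩)
          (true, zi) := by
        refine ⟨by rw [ha]; exact h1, h4, by simp, by simp⟩
      have hb2 : Between r (false, ⟨a.val, Nat.lt_of_succ_lt h⟩) (false, ⟨a.val + 1, h⟩)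
          (true, b) := by
        refine ⟨by rw [ha]; exact hc.1, vb_lt_succ hr hc h, by simp, by simp⟩
      have := hut a.val h zi b hb1 hb2
      exact h3 (by rw [this])

lemma le_pred (hr' : IsLinExt r') (hc' : CoveredBy r' (true, b) (false, a))
    (hut' : UnbarredTight r') (h0 : 0 < a.val) (hlt : a.val - 1 < n) {z : Letter n}
    (h1 : r' z (false, a)) (h2 : z ≠ (false, a)) (h3 : z ≠ (true, b)) :
    r' z (false, ⟨a.val - 1, hlt⟩) := by
  obtain ⟨zb, zi⟩ := z
  cases zb
  · have hle : zi ≤ a := (unb_le hr').1 h1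
    have hne : zi ≠ a := fun he => h2 (by rw [he])
    refine (unb_le hr').2 ?_
    have : zi < a := hle.lt_of_ne hne
    rw [Fin.lt_def] at this
    rw [Fin.le_def]; simp; omega
  · rcases lin_total hr' (true, zi) (false, ⟨a.val - 1, hlt⟩) with h4 | h4
    · exact h4
    · exfalso
      have hsl : a.val - 1 + 1 < n := by omega
      have ha : (⟨a.val - 1 + 1, hsl⟩ : Fin n) = a := Fin.ext (by simp; omega)
      have hb1 : Between r' (false, ⟨a.val - 1, hlt⟩) (false, ⟨a.val - 1 + 1, hsl⟩)
          (true, zi) := by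
        refine ⟨h4, by rw [ha]; exact h1, by simp, by simp⟩
      have hb2 : Between r' (false, ⟨a.val - 1, hlt⟩) (false, ⟨a.val - 1 + 1, hsl⟩)
          (true, b) := by
        refine ⟨pred_lt_vb hr' hc' h0 hlt, by rw [ha]; exact hc'.1, by simp, by simp⟩
      have := hut' (a.val - 1) hsl zi b hb1 hb2
      exact h3 (by rw [this])

end ConvSwitch
namespace ConvSwitch

variable {n : ℕ} {r r' : Letter n → Letter n → Prop} {sh : YoungDiagram}
  {T T' : Filling n} {a b : Fin n}

/-- the set of boxes containing `a` or `b̄`. -/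
def isS (T : Filling n) (a b : Fin n) (c : ℕ × ℕ) : Prop :=
  T c = some (false, a) ∨ T c = some (true, b)

noncomputable def RR (T : Filling n) (a b : Fin n) (x : ℕ) : ℕ := sSup {j | isS T a b (x, j)}

noncomputable def LL (T : Filling n) (a b : Fin n) (x : ℕ) : ℕ := sInf {j | isS T a b (x, j)}

noncomputable def cnt (sh : YoungDiagram) (T : Filling n) (v : Letter n) (x : ℕ) : ℕ :=
  ((Finset.range (sh.rowLen x)).filter (fun j => T (x, j) = some v)).card

noncomputable def Fcnt (sh : YoungDiagram) (T : Filling n) (v : Letter n) (t : ℕ) : ℕ :=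
  ∑ x ∈ Finset.range t, cnt sh T v x

noncomputable def lenS (sh : YoungDiagram) (T : Filling n) (a b : Fin n) (x : ℕ) : ℕ :=
  ((Finset.range (sh.rowLen x)).filter (fun j => isS T a b (x, j))).card

def rowNE (T : Filling n) (a b : Fin n) (x : ℕ) : Prop := ∃ j, isS T a b (x, j)

def linked (T : Filling n) (a b : Fin n) (x : ℕ) : Prop :=
  rowNE T a b x ∧ rowNE T a b (x + 1) ∧ LL T a b x ≤ RR T a b (x + 1)

noncomputable def OpenW (sh : YoungDiagram) (T : Filling n) (a b : Fin n) (t : ℕ) : Prop :=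
  ∃ i₁, i₁ < t ∧ rowNE T a b i₁ ∧ cnt sh T (true, b) i₁ = 0 ∧
    ∀ x, i₁ ≤ x → x < t → linked T a b x

lemma mem_sh_of_eq (hT : IsColoredTableau r sh T) {c : ℕ × ℕ} {v : Letter n}
    (h : T c = some v) : c ∈ sh := (hT.1 c).1 (by rw [h]; rfl)

lemma isS_mem (hT : IsColoredTableau r sh T) {x j : ℕ} (h : isS T a b (x, j)) :
    (x, j) ∈ sh := by rcases h with h | h <;> exact mem_sh_of_eq hT h

lemma isS_lt_rowLen (hT : IsColoredTableau r sh T) {x j : ℕ} (h : isS T a b (x, j)) :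
    j < sh.rowLen x := (YoungDiagram.mem_iff_lt_rowLen).1 (isS_mem hT h)

lemma bddS (hT : IsColoredTableau r sh T) (x : ℕ) : BddAbove {j | isS T a b (x, j)} :=
  ⟨sh.rowLen x, fun _ hj => le_of_lt (isS_lt_rowLen hT hj)⟩

lemma RR_mem (hT : IsColoredTableau r sh T) {x : ℕ} (hne : rowNE T a b x) :
    isS T a b (x, RR T a b x) := Nat.sSup_mem hne (bddS hT x)

lemma LL_mem {x : ℕ} (hne : rowNE T a b x) : isS T a b (x, LL T a b x) :=
  Nat.sInf_mem hne

lemma le_RR (hT : IsColoredTableau r sh T) {x j : ℕ} (h : isS T a b (x, j)) :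
    j ≤ RR T a b x := le_csSup (bddS hT x) h

lemma LL_le {x j : ℕ} (h : isS T a b (x, j)) : LL T a b x ≤ j := Nat.sInf_le h

lemma LL_le_RR (hT : IsColoredTableau r sh T) {x : ℕ} (hne : rowNE T a b x) :
    LL T a b x ≤ RR T a b x := le_RR hT (LL_mem hne)

lemma val_exists (hT : IsColoredTableau r sh T) {c : ℕ × ℕ} (hc : c ∈ sh) :
    ∃ v, T c = some v := by
  have := (hT.1 c).2 hc
  exact Option.isSome_iff_exists.1 this

lemma va_le (hr : IsLinExt r) (hc : CoveredBy r (false, a) (true, b)) {v : Letter n}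
    (h : v = (false, a) ∨ v = (true, b)) : r (false, a) v := by
  rcases h with h | h <;> subst h
  · exact lin_refl hr _
  · exact hc.1

lemma le_vb (hr : IsLinExt r) (hc : CoveredBy r (false, a) (true, b)) {v : Letter n}
    (h : v = (false, a) ∨ v = (true, b)) : r v (true, b) := by
  rcases h with h | h <;> subst h
  · exact hc.1
  · exact lin_refl hr _

lemma isS_of_eq_or (h : T (x, j) = some (false, a) ∨ T (x, j) = some (true, b)) :
    isS T a b (x, j) := h

lemma isS_val (hT : IsColoredTableau r sh T) {x j : ℕ} (h : isS T a b (x, j)) :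
    ∃ v, T (x, j) = some v ∧ (v = (false, a) ∨ v = (true, b)) := by
  rcases h with h | h
  · exact ⟨_, h, Or.inl rfl⟩
  · exact ⟨_, h, Or.inr rfl⟩

/-- contiguity of the S-cells in a row -/
lemma isS_between (hr : IsLinExt r) (hc : CoveredBy r (false, a) (true, b))
    (hT : IsColoredTableau r sh T) {x j : ℕ} (hne : rowNE T a b x)
    (h1 : LL T a b x ≤ j) (h2 : j ≤ RR T a b x) : isS T a b (x, j) := by
  obtain ⟨vL, hvL, hvLor⟩ := isS_val hT (LL_mem hne)
  obtain ⟨vR, hvR, hvRor⟩ := isS_val hT (RR_mem hT hne)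
  have hsh : (x, j) ∈ sh := by
    rw [YoungDiagram.mem_iff_lt_rowLen]
    exact lt_of_le_of_lt h2 (isS_lt_rowLen hT (RR_mem hT hne))
  obtain ⟨v, hv⟩ := val_exists hT hsh
  have hva : r (false, a) v :=
    lin_trans hr (va_le hr hc hvLor) (hT.2.1 x _ _ _ _ h1 hvL hv)
  have hvb : r v (true, b) :=
    lin_trans hr (hT.2.1 x _ _ _ _ h2 hv hvR) (le_vb hr hc hvRor)
  rcases hc.2.2 v hva hvb with h | h <;> rw [h] at hv
  · exact Or.inl hv
  · exact Or.inr hv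

/-- cells right of the segment have values `>` both `a` and `b̄` -/
lemma right_val (hr : IsLinExt r) (hc : CoveredBy r (false, a) (true, b))
    (hT : IsColoredTableau r sh T) {x j : ℕ} (hne : rowNE T a b x)
    (hgt : RR T a b x < j) (hsh : (x, j) ∈ sh) :
    ∃ v, T (x, j) = some v ∧ r (false, a) v ∧ v ≠ (false, a) ∧ v ≠ (true, b) := by
  obtain ⟨v, hv⟩ := val_exists hT hsh
  obtain ⟨vR, hvR, hvRor⟩ := isS_val hT (RR_mem hT hne)
  have hva : r (false, a) v :=
    lin_trans hr (va_le hr hc hvRor) (hT.2.1 x _ _ _ _ (le_of_lt hgt) hvR hv)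
  have hnS : ¬ isS T a b (x, j) := fun hS => absurd (le_RR hT hS) (by omega)
  refine ⟨v, hv, hva, ?_, ?_⟩ <;> intro h <;> rw [h] at hv
  · exact hnS (Or.inl hv)
  · exact hnS (Or.inr hv)

/-- any S-cell in row `x+1` lies weakly left of the right end of row `x`'s segment -/
lemma below_le_RR (hr : IsLinExt r) (hc : CoveredBy r (false, a) (true, b))
    (hT : IsColoredTableau r sh T) {x j : ℕ} (hne : rowNE T a b x)
    (hS1 : isS T a b (x + 1, j)) : j ≤ RR T a b x := by
  by_contra hgt
  push_neg at hgt
  have hsh : (x, j) ∈ sh := sh.up_left_mem (by omega) (le_refl j) (isS_mem hT hS1)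
  obtain ⟨v, hv, hva, hne1, hne2⟩ := right_val hr hc hT hne hgt hsh
  obtain ⟨w, hw, hwor⟩ := isS_val hT hS1
  have hcol : r v w := hT.2.2.1 x (x + 1) j _ _ (by omega) hv hw
  have hvb : r v (true, b) := lin_trans hr hcol (le_vb hr hc hwor)
  rcases hc.2.2 v hva hvb with h | h
  · exact hne1 h
  · exact hne2 h

/-- left ends weakly decrease going down -/
lemma below_LL_le (hr : IsLinExt r) (hc : CoveredBy r (false, a) (true, b))
    (hT : IsColoredTableau r sh T) {x : ℕ} (hne : rowNE T a b x)
    (hne1 : rowNE T a b (x + 1)) : LL T a b (x + 1) ≤ LL T a b x := by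
  by_contra hgt
  push_neg at hgt
  have hsh : (x + 1, LL T a b x) ∈ sh :=
    sh.up_left_mem (le_refl _) (le_of_lt hgt) (isS_mem hT (LL_mem hne1))
  obtain ⟨v, hv⟩ := val_exists hT hsh
  obtain ⟨w, hw, hwor⟩ := isS_val hT (LL_mem hne)
  obtain ⟨w', hw', hwor'⟩ := isS_val hT (LL_mem hne1)
  have hva : r (false, a) v :=
    lin_trans hr (va_le hr hc hwor) (hT.2.2.1 x (x + 1) _ _ _ (by omega) hw hv)
  have hvb : r v (true, b) :=
    lin_trans hr (hT.2.1 (x + 1) _ _ _ _ (le_of_lt hgt) hv hw') (le_vb hr hc hwor')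
  have hnS : ¬ isS T a b (x + 1, LL T a b x) := fun hS => absurd (LL_le hS) (by omega)
  rcases hc.2.2 v hva hvb with h | h <;> rw [h] at hv
  · exact hnS (Or.inl hv)
  · exact hnS (Or.inr hv)

end ConvSwitch
namespace ConvSwitch

variable {n : ℕ} {r r' : Letter n → Letter n → Prop} {sh : YoungDiagram}
  {T T' : Filling n} {a b : Fin n}

/-- no column contains `a` twice, in the form we use it -/
lemma no_col_va (hT : IsColoredTableau r sh T) {x j : ℕ}
    (h1 : T (x, j) = some (false, a)) (h2 : T (x + 1, j) = some (false, a)) : False :=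
  hT.2.2.2.1 x (x + 1) j a (by omega) h1 h2

/-- a vertically adjacent pair of S-cells: the lower one is `b̄` (w.r.t. `r`, where `a < b̄`). -/
lemma vert_lower_vb (hr : IsLinExt r) (hc : CoveredBy r (false, a) (true, b))
    (hT : IsColoredTableau r sh T) {x j : ℕ} (hS0 : isS T a b (x, j))
    (hS1 : isS T a b (x + 1, j)) : T (x + 1, j) = some (true, b) := by
  rcases hS1 with h1 | h1
  · exfalso
    rcases hS0 with h0 | h0
    · exact no_col_va hT h0 h1
    · exact not_r_vb_va hr hc (hT.2.2.1 x (x + 1) j _ _ (by omega) h0 h1)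
  · exact h1

/-- same for `T'` w.r.t. `r'` (where `b̄ < a`): the upper one is `b̄`. -/
lemma vert_upper_vb' (hr' : IsLinExt r') (hc' : CoveredBy r' (true, b) (false, a))
    (hT' : IsColoredTableau r' sh T') (hts : TableauSwitch a b T T') {x j : ℕ}
    (hS0 : isS T a b (x, j)) (hS1 : isS T a b (x + 1, j)) :
    T' (x, j) = some (true, b) := by
  have h0 := (hts.2.1 (x, j)).1 hS0
  have h1 := (hts.2.1 (x + 1, j)).1 hS1
  rcases h0 with h0 | h0
  · exfalso
    rcases h1 with h1 | h1
    · exact hT'.2.2.2.1 x (x + 1) j a (by omega) h0 h1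
    · exact not_r'_va_vb hr' hc' (hT'.2.2.1 x (x + 1) j _ _ (by omega) h0 h1)
  · exact h0

/-- linked rows share exactly one column: `LL x = RR (x+1)`. -/
lemma linked_LL_eq_RR (hr : IsLinExt r) (hc : CoveredBy r (false, a) (true, b))
    (hT : IsColoredTableau r sh T) {x : ℕ} (hl : linked T a b x) :
    LL T a b x = RR T a b (x + 1) := by
  obtain ⟨hne, hne1, hle⟩ := hl
  refine le_antisymm hle ?_
  by_contra hgt
  push_neg at hgt
  -- 2x2 block at columns y = LL x < y' = RR (x+1)
  set y := LL T a b x with hy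
  set y' := RR T a b (x + 1) with hy'
  have hS3 : isS T a b (x + 1, y) :=
    isS_between hr hc hT hne1 (below_LL_le hr hc hT hne hne1) (le_of_lt hgt)
  have hS4 : isS T a b (x + 1, y') := RR_mem hT hne1
  -- lower-left is b̄, lower-right is b̄ : contradiction with row-distinctness
  have h3 : T (x + 1, y) = some (true, b) := vert_lower_vb hr hc hT (LL_mem hne) hS3
  have hS2 : isS T a b (x, y') :=
    isS_between hr hc hT hne (le_of_lt hgt) (below_le_RR hr hc hT hne hS4)
  have h4 : T (x + 1, y') = some (true, b) := vert_lower_vb hr hc hT hS2 hS4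
  exact hT.2.2.2.2 (x + 1) y y' b (by omega) h3 h4

lemma linked_T_vb (hr : IsLinExt r) (hc : CoveredBy r (false, a) (true, b))
    (hT : IsColoredTableau r sh T) {x : ℕ} (hl : linked T a b x) :
    T (x + 1, RR T a b (x + 1)) = some (true, b) := by
  have heq := linked_LL_eq_RR hr hc hT hl
  have hS0 : isS T a b (x, RR T a b (x + 1)) := by rw [← heq]; exact LL_mem hl.1
  exact vert_lower_vb hr hc hT hS0 (RR_mem hT hl.2.1)

lemma linked_T'_vb (hr' : IsLinExt r') (hc' : CoveredBy r' (true, b) (false, a))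
    (hr : IsLinExt r) (hc : CoveredBy r (false, a) (true, b))
    (hT : IsColoredTableau r sh T) (hT' : IsColoredTableau r' sh T')
    (hts : TableauSwitch a b T T') {x : ℕ} (hl : linked T a b x) :
    T' (x, LL T a b x) = some (true, b) := by
  have heq := linked_LL_eq_RR hr hc hT hl
  have hS1 : isS T a b (x + 1, LL T a b x) := by rw [heq]; exact RR_mem hT hl.2.1
  exact vert_upper_vb' hr' hc' hT' hts (LL_mem hl.1) hS1

/-! ### counting lemmas -/

lemma cnt_vb_le_one (hT : IsColoredTableau r sh T) (x : ℕ) : cnt sh T (true, b) x ≤ 1 := by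
  refine Finset.card_le_one.2 ?_
  intro j hj j' hj'
  simp only [Finset.mem_filter, Finset.mem_range] at hj hj'
  by_contra hne
  exact hT.2.2.2.2 x j j' b hne hj.2 hj'.2

lemma cnt_pos (hT : IsColoredTableau r sh T) {x j : ℕ} {v : Letter n}
    (h : T (x, j) = some v) : 1 ≤ cnt sh T v x := by
  refine Finset.card_pos.2 ⟨j, ?_⟩
  simp only [Finset.mem_filter, Finset.mem_range]
  exact ⟨(YoungDiagram.mem_iff_lt_rowLen).1 (mem_sh_of_eq hT h), h⟩

lemma cnt_add_eq_lenS (x : ℕ) : cnt sh T (false, a) x + cnt sh T (true, b) x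
    = lenS sh T a b x := by
  rw [cnt, cnt, lenS]
  rw [← Finset.card_union_of_disjoint]
  · rw [← Finset.filter_or]
    exact Finset.card_bij (fun j _ => j) (fun j hj => by
      simp only [Finset.mem_filter] at hj ⊢; exact hj) (fun _ _ _ _ h => h)
      (fun j hj => ⟨j, by simp only [Finset.mem_filter] at hj ⊢; exact hj, rfl⟩)
  · rw [Finset.disjoint_filter]
    intro j _ h1 h2
    rw [h1] at h2
    simp at h2

lemma cnt'_add_eq_lenS (hts : TableauSwitch a b T T') (x : ℕ) :
    cnt sh T' (false, a) x + cnt sh T' (true, b) x = lenS sh T a b x := by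
  rw [cnt, cnt, lenS]
  rw [← Finset.card_union_of_disjoint]
  · congr 1
    rw [← Finset.filter_or]
    refine Finset.filter_congr ?_
    intro j _
    constructor
    · intro h
      exact (hts.2.1 (x, j)).2 h
    · intro h
      exact (hts.2.1 (x, j)).1 h
  · rw [Finset.disjoint_filter]
    intro j _ h1 h2
    rw [h1] at h2
    simp at h2

lemma lenS_lower (hr : IsLinExt r) (hc : CoveredBy r (false, a) (true, b))
    (hT : IsColoredTableau r sh T) {x : ℕ} (hne : rowNE T a b x) :
    RR T a b x + 1 ≤ lenS sh T a b x + LL T a b x := by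
  have hsub : Finset.Icc (LL T a b x) (RR T a b x) ⊆
      (Finset.range (sh.rowLen x)).filter (fun j => isS T a b (x, j)) := by
    intro j hj
    rw [Finset.mem_Icc] at hj
    have hS := isS_between hr hc hT hne hj.1 hj.2
    simp only [Finset.mem_filter, Finset.mem_range]
    exact ⟨isS_lt_rowLen hT hS, hS⟩
  have hcard := Finset.card_le_card hsub
  rw [Nat.card_Icc] at hcard
  have hLR := LL_le_RR hT hne
  rw [lenS]
  omega

lemma cnt_zero_of_empty (hT : IsColoredTableau r sh T) {x : ℕ} (hne : ¬ rowNE T a b x) :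
    cnt sh T (false, a) x = 0 ∧ cnt sh T (true, b) x = 0 := by
  constructor
  · rw [cnt, Finset.card_eq_zero, Finset.filter_eq_empty_iff]
    intro j _ h
    exact hne ⟨j, Or.inl h⟩
  · rw [cnt, Finset.card_eq_zero, Finset.filter_eq_empty_iff]
    intro j _ h
    exact hne ⟨j, Or.inr h⟩

lemma cnt'_zero_of_empty (hts : TableauSwitch a b T T') {x : ℕ} (hne : ¬ rowNE T a b x) :
    cnt sh T' (false, a) x = 0 ∧ cnt sh T' (true, b) x = 0 := by
  constructor
  · rw [cnt, Finset.card_eq_zero, Finset.filter_eq_empty_iff]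
    intro j _ h
    exact hne ⟨j, (hts.2.1 (x, j)).2 (Or.inl h)⟩
  · rw [cnt, Finset.card_eq_zero, Finset.filter_eq_empty_iff]
    intro j _ h
    exact hne ⟨j, (hts.2.1 (x, j)).2 (Or.inr h)⟩

lemma cnt_eq_of_ne (hts : TableauSwitch a b T T') {w : Fin n} (hw : w ≠ a) (x : ℕ) :
    cnt sh T (false, w) x = cnt sh T' (false, w) x := by
  rw [cnt, cnt]
  congr 1
  refine Finset.filter_congr ?_
  intro j _
  have hnotS : ∀ h : T (x, j) = some (false, w), ¬ isS T a b (x, j) := by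
    intro h hS
    rcases hS with hS | hS <;> rw [h] at hS
    · have h2 := Option.some.inj hS
      simp only [Prod.mk.injEq] at h2
      exact hw h2.2
    · simp at hS
  constructor
  · intro h
    rw [hts.1 (x, j) (hnotS h)]
    exact h
  · intro h
    by_cases hS : isS T a b (x, j)
    · exfalso
      rcases (hts.2.1 (x, j)).1 hS with h2 | h2 <;> rw [h] at h2
      · have h3 := Option.some.inj h2
        simp only [Prod.mk.injEq] at h3
        exact hw h3.2
      · simp at h2
    · rw [hts.1 (x, j) hS] at h
      exact h

lemma Fcnt_eq_of_ne (hts : TableauSwitch a b T T') {w : Fin n} (hw : w ≠ a) (t : ℕ) :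
    Fcnt sh T (false, w) t = Fcnt sh T' (false, w) t := by
  unfold Fcnt
  exact Finset.sum_congr rfl fun x _ => cnt_eq_of_ne hts hw x

end ConvSwitch
namespace ConvSwitch

variable {n : ℕ} {r r' : Letter n → Letter n → Prop} {sh : YoungDiagram}
  {T T' : Filling n} {a b : Fin n}

/-- cells containing `a+1` in row `x+1` lie in columns `(RR (x+1), RR x]`. -/
lemma cnt_succ_bound (hr : IsLinExt r) (hc : CoveredBy r (false, a) (true, b))
    (hut : UnbarredTight r) (hT : IsColoredTableau r sh T) (h : a.val + 1 < n)
    {x : ℕ} (hne : rowNE T a b x) (hne1 : rowNE T a b (x + 1)) :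
    cnt sh T (false, ⟨a.val + 1, h⟩) (x + 1) + RR T a b (x + 1) ≤ RR T a b x := by
  set asucc : Fin n := ⟨a.val + 1, h⟩ with hasucc
  have hsub : (Finset.range (sh.rowLen (x + 1))).filter
      (fun j => T (x + 1, j) = some (false, asucc)) ⊆
      Finset.Ioc (RR T a b (x + 1)) (RR T a b x) := by
    intro j hj
    simp only [Finset.mem_filter, Finset.mem_range] at hj
    obtain ⟨hjl, hv⟩ := hj
    have hnotS : ¬ isS T a b (x + 1, j) := by
      intro hS
      rcases hS with hS | hS <;> rw [hv] at hS <;>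
        have h2 := Option.some.inj hS <;> simp only [Prod.mk.injEq] at h2
      · exact absurd (congrArg Fin.val h2.2) (by simp [hasucc])
      · exact absurd h2.1 (by simp)
    have claim1 : RR T a b (x + 1) < j := by
      by_contra hle
      push_neg at hle
      rcases le_or_gt (LL T a b (x + 1)) j with hge | hlt
      · exact hnotS (isS_between hr hc hT hne1 hge hle)
      · obtain ⟨w, hw, hwor⟩ := isS_val hT (LL_mem hne1)
        have hmono : r (false, asucc) w := hT.2.1 (x + 1) _ _ _ _ (le_of_lt hlt) hv hw
        have h1 : r (false, asucc) (true, b) := lin_trans hr hmono (le_vb hr hc hwor)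
        have h2 := lin_antisymm hr h1 (vb_lt_succ hr hc h)
        simp at h2
    have claim2 : j ≤ RR T a b x := by
      by_contra hgt
      push_neg at hgt
      have hsh : (x, j) ∈ sh := sh.up_left_mem (by omega) (le_refl j) (mem_sh_of_eq hT hv)
      obtain ⟨v, hv2, hva, hv3, hv4⟩ := right_val hr hc hT hne hgt hsh
      have hcol : r v (false, asucc) := hT.2.2.1 x (x + 1) j _ _ (by omega) hv2 hv
      have hcd : v ≠ (false, asucc) := by
        intro heq
        rw [heq] at hv2
        exact hT.2.2.2.1 x (x + 1) j asucc (by omega) hv2 hv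
      have := succ_le hr hc hut h hva hv3 hv4
      exact hcd (lin_antisymm hr hcol this)
    rw [Finset.mem_Ioc]
    exact ⟨claim1, claim2⟩
  have hcard := Finset.card_le_card hsub
  rw [Nat.card_Ioc] at hcard
  have hRle : RR T a b (x + 1) ≤ RR T a b x := below_le_RR hr hc hT hne (RR_mem hT hne1)
  rw [cnt]
  omega

/-- cells containing `a-1` in row `x` lie in columns `[LL (x+1), RR (x+1))`, when
row `x` is linked to row `x+1`. -/
lemma cnt_pred_bound (hr : IsLinExt r) (hc : CoveredBy r (false, a) (true, b))
    (hr' : IsLinExt r') (hc' : CoveredBy r' (true, b) (false, a))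
    (hut' : UnbarredTight r') (hT : IsColoredTableau r sh T)
    (hT' : IsColoredTableau r' sh T') (hts : TableauSwitch a b T T')
    (h0 : 0 < a.val) (hlt : a.val - 1 < n) {x : ℕ} (hl : linked T a b x) :
    cnt sh T' (false, ⟨a.val - 1, hlt⟩) x + LL T a b (x + 1) ≤ RR T a b (x + 1) := by
  set apred : Fin n := ⟨a.val - 1, hlt⟩ with hapred
  have hsub : (Finset.range (sh.rowLen x)).filter
      (fun j => T' (x, j) = some (false, apred)) ⊆
      Finset.Ico (LL T a b (x + 1)) (RR T a b (x + 1)) := by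
    intro j hj
    simp only [Finset.mem_filter, Finset.mem_range] at hj
    obtain ⟨hjl, hv⟩ := hj
    have hnotS : ¬ isS T a b (x, j) := by
      intro hS
      rcases (hts.2.1 (x, j)).1 hS with hS | hS <;> rw [hv] at hS <;>
        have h2 := Option.some.inj hS <;> simp only [Prod.mk.injEq] at h2
      · exact absurd (congrArg Fin.val h2.2) (by simp [hapred]; omega)
      · exact absurd h2.1 (by simp)
    have claim1 : j < LL T a b x := by
      by_contra hge
      push_neg at hge
      rcases le_or_gt j (RR T a b x) with hle | hgt
      · exact hnotS (isS_between hr hc hT hl.1 hge hle)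
      · obtain ⟨w, hw, hwor⟩ := isS_val hT (RR_mem hT hl.1)
        obtain ⟨w', hw'2, hwor'⟩ : ∃ w', T' (x, RR T a b x) = some w' ∧
            (w' = (false, a) ∨ w' = (true, b)) := by
          rcases (hts.2.1 (x, RR T a b x)).1 (RR_mem hT hl.1) with h' | h'
          · exact ⟨_, h', Or.inl rfl⟩
          · exact ⟨_, h', Or.inr rfl⟩
        have hmono : r' w' (false, apred) := hT'.2.1 x _ _ _ _ (le_of_lt hgt) hw'2 hv
        have h1 : r' (true, b) (false, apred) := by
          rcases hwor' with h' | h' <;> subst h'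
          · exact lin_trans hr' hc'.1 hmono
          · exact hmono
        have h2 := lin_antisymm hr' h1 (pred_lt_vb hr' hc' h0 hlt)
        simp at h2
    have claim2 : LL T a b (x + 1) ≤ j := by
      by_contra hlt2
      push_neg at hlt2
      have hsh : (x + 1, j) ∈ sh :=
        sh.up_left_mem (le_refl _) (le_of_lt hlt2) (isS_mem hT (LL_mem hl.2.1))
      obtain ⟨v, hv2⟩ := val_exists hT' hsh
      have hcol : r' (false, apred) v := hT'.2.2.1 x (x + 1) j _ _ (by omega) hv hv2
      have hnotS1 : ¬ isS T a b (x + 1, j) := fun hS => absurd (LL_le hS) (by omega)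
      have hv3 : v ≠ (false, a) := by
        intro heq; rw [heq] at hv2
        exact hnotS1 ((hts.2.1 (x + 1, j)).2 (Or.inl hv2))
      have hv4 : v ≠ (true, b) := by
        intro heq; rw [heq] at hv2
        exact hnotS1 ((hts.2.1 (x + 1, j)).2 (Or.inr hv2))
      obtain ⟨w', hw'2, hwor'⟩ : ∃ w', T' (x + 1, LL T a b (x + 1)) = some w' ∧
          (w' = (false, a) ∨ w' = (true, b)) := by
        rcases (hts.2.1 (x + 1, LL T a b (x + 1))).1 (LL_mem hl.2.1) with h' | h'
        · exact ⟨_, h', Or.inl rfl⟩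
        · exact ⟨_, h', Or.inr rfl⟩
      have hrow : r' v w' := hT'.2.1 (x + 1) _ _ _ _ (le_of_lt hlt2) hv2 hw'2
      have hvva : r' v (false, a) := by
        rcases hwor' with h' | h' <;> subst h'
        · exact hrow
        · exact lin_trans hr' hrow hc'.1
      have hcd : v ≠ (false, apred) := by
        intro heq
        rw [heq] at hv2
        exact hT'.2.2.2.1 (x + 1) x j apred (by omega) hv2 hv
      have := le_pred hr' hc' hut' h0 hlt hvva hv3 hv4
      exact hcd (lin_antisymm hr' this hcol)
    rw [Finset.mem_Ico]
    have heq := linked_LL_eq_RR hr hc hT hl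
    exact ⟨claim2, by omega⟩
  have hcard := Finset.card_le_card hsub
  rw [Nat.card_Ico] at hcard
  have hLR : LL T a b (x + 1) ≤ RR T a b (x + 1) := LL_le_RR hT hl.2.1
  rw [cnt]
  omega

end ConvSwitch
namespace ConvSwitch

variable {n : ℕ} {r r' : Letter n → Letter n → Prop} {sh : YoungDiagram}
  {T T' : Filling n} {a b : Fin n}

/-- the set S as a `Set`, matching the form in `TableauSwitch` -/
def Sset (T : Filling n) (a b : Fin n) : Set (ℕ × ℕ) :=
  {c | T c = some (false, a) ∨ T c = some (true, b)}

lemma mem_Sset {c : ℕ × ℕ} : c ∈ Sset T a b ↔ isS T a b c := Iff.rfl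

lemma boxAdj_symm {c d : ℕ × ℕ} (h : BoxAdj c d) : BoxAdj d c := by
  rcases h with ⟨h1, h2⟩ | ⟨h1, h2⟩
  · exact Or.inl ⟨h1.symm, h2.symm⟩
  · exact Or.inr ⟨h1.symm, h2.symm⟩

lemma conn_symm {S : Set (ℕ × ℕ)} {c d : ℕ × ℕ} (h : ConnIn S c d) : ConnIn S d c := by
  refine Std.Symm.symm (self := @Relation.ReflTransGen.symmetric _ (fun u v => u ∈ S ∧ v ∈ S ∧ BoxAdj u v) ⟨?_⟩) _ _ h
  intro u v ⟨h1, h2, h3⟩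
  exact ⟨h2, h1, boxAdj_symm h3⟩

lemma conn_row_aux (hr : IsLinExt r) (hc : CoveredBy r (false, a) (true, b))
    (hT : IsColoredTableau r sh T) {x j : ℕ} :
    ∀ k, isS T a b (x, j) → isS T a b (x, j + k) → ConnIn (Sset T a b) (x, j) (x, j + k) := by
  intro k
  induction k with
  | zero => intro h _; exact Relation.ReflTransGen.refl
  | succ k ih =>
    intro h1 h2
    have hmid : isS T a b (x, j + k) := by
      refine isS_between hr hc hT ⟨j, h1⟩ ?_ ?_
      · exact le_trans (LL_le h1) (by omega)
      · have := le_RR hT h2; omega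
    refine Relation.ReflTransGen.tail (ih h1 hmid) ?_
    exact ⟨hmid, h2, Or.inl ⟨rfl, Or.inl rfl⟩⟩

lemma conn_row (hr : IsLinExt r) (hc : CoveredBy r (false, a) (true, b))
    (hT : IsColoredTableau r sh T) {x j j' : ℕ} (hS : isS T a b (x, j))
    (hS' : isS T a b (x, j')) : ConnIn (Sset T a b) (x, j) (x, j') := by
  rcases le_or_gt j j' with h | h
  · obtain ⟨k, rfl⟩ := Nat.le.dest h
    exact conn_row_aux hr hc hT k hS hS'
  · obtain ⟨k, rfl⟩ := Nat.le.dest (le_of_lt h)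
    exact conn_symm (conn_row_aux hr hc hT k hS' hS)

lemma conn_vert (hr : IsLinExt r) (hc : CoveredBy r (false, a) (true, b))
    (hT : IsColoredTableau r sh T) {x : ℕ} (hl : linked T a b x) :
    ConnIn (Sset T a b) (x, LL T a b x) (x + 1, LL T a b x) := by
  have heq := linked_LL_eq_RR hr hc hT hl
  have hS1 : isS T a b (x + 1, LL T a b x) := by rw [heq]; exact RR_mem hT hl.2.1
  exact Relation.ReflTransGen.single ⟨LL_mem hl.1, hS1, Or.inr ⟨rfl, Or.inl rfl⟩⟩

lemma conn_top_to (hr : IsLinExt r) (hc : CoveredBy r (false, a) (true, b))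
    (hT : IsColoredTableau r sh T) {i₁ : ℕ} (hneTop : rowNE T a b i₁) {x : ℕ}
    (hge : i₁ ≤ x) (hchain : ∀ y, i₁ ≤ y → y < x → linked T a b y) :
    ConnIn (Sset T a b) (i₁, LL T a b i₁) (x, LL T a b x) := by
  induction x, hge using Nat.le_induction with
  | base => exact Relation.ReflTransGen.refl
  | succ x hx ih =>
    have hlx : linked T a b x := hchain x hx (by omega)
    have h1 := ih (fun y hy hy' => hchain y hy (by omega))
    have h2 := conn_vert hr hc hT hlx
    have heq := linked_LL_eq_RR hr hc hT hlx
    have hS1 : isS T a b (x + 1, LL T a b x) := by rw [heq]; exact RR_mem hT hlx.2.1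
    have h3 := conn_row hr hc hT hS1 (LL_mem hlx.2.1)
    exact Relation.ReflTransGen.trans h1 (Relation.ReflTransGen.trans h2 h3)

lemma conn_iff (hr : IsLinExt r) (hc : CoveredBy r (false, a) (true, b))
    (hT : IsColoredTableau r sh T) {i₁ i₂ : ℕ} (h12 : i₁ ≤ i₂)
    (hneTop : rowNE T a b i₁)
    (hchain : ∀ y, i₁ ≤ y → y < i₂ → linked T a b y)
    (htop : ∀ u, i₁ = u + 1 → ¬ linked T a b u) (hbot : ¬ linked T a b i₂)
    (d : ℕ × ℕ) :
    ConnIn (Sset T a b) (i₁, LL T a b i₁) d ↔ (isS T a b d ∧ i₁ ≤ d.1 ∧ d.1 ≤ i₂) := by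
  constructor
  · intro h
    induction h with
    | refl => exact ⟨LL_mem hneTop, le_refl _, h12⟩
    | tail h1 step ih =>
      rename_i mid d'
      obtain ⟨hmS, hdS, hadj⟩ := step
      obtain ⟨hmS', hm1, hm2⟩ := ih
      obtain ⟨m1, m2⟩ := mid
      obtain ⟨d1, d2⟩ := d'
      rcases hadj with ⟨h1', _⟩ | ⟨h1', h2'⟩
      · simp only at h1'
        exact ⟨hdS, by omega, by omega⟩
      · simp only at h1' h2'
        subst h1'
        rcases h2' with h2' | h2'
        · -- going down : m1 + 1 = d1
          have hlm : linked T a b m1 := by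
            refine ⟨⟨m2, hmS⟩, ⟨m2, by rw [← h2'] at hdS; exact hdS⟩, ?_⟩
            refine le_trans (LL_le hmS) (le_RR hT ?_)
            rw [← h2'] at hdS; exact hdS
          have : m1 ≠ i₂ := fun he => hbot (he ▸ hlm)
          exact ⟨hdS, by omega, by omega⟩
        · -- going up : d1 + 1 = m1
          have hld : linked T a b d1 := by
            refine ⟨⟨m2, hdS⟩, ⟨m2, by rw [h2']; exact hmS⟩, ?_⟩
            refine le_trans (LL_le hdS) (le_RR hT ?_)
            rw [h2']; exact hmS
          have : ¬ (i₁ = d1 + 1) := fun he => htop d1 he hld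
          exact ⟨hdS, by omega, by omega⟩
  · rintro ⟨hdS, hd1, hd2⟩
    obtain ⟨d1, d2⟩ := d
    have h1 := conn_top_to hr hc hT hneTop hd1
      (fun y hy hy' => hchain y hy (by omega))
    exact Relation.ReflTransGen.trans h1 (conn_row hr hc hT (LL_mem ⟨d2, hdS⟩) hdS)

/-- per-block `a`-count equality, from the `TableauSwitch` hypothesis -/
lemma block_sum (hr : IsLinExt r) (hc : CoveredBy r (false, a) (true, b))
    (hT : IsColoredTableau r sh T) (hT' : IsColoredTableau r' sh T')
    (hts : TableauSwitch a b T T') {i₁ i₂ : ℕ} (h12 : i₁ ≤ i₂)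
    (hneTop : rowNE T a b i₁)
    (hchain : ∀ y, i₁ ≤ y → y < i₂ → linked T a b y)
    (htop : ∀ u, i₁ = u + 1 → ¬ linked T a b u) (hbot : ¬ linked T a b i₂) :
    ∑ x ∈ Finset.Icc i₁ i₂, cnt sh T (false, a) x
      = ∑ x ∈ Finset.Icc i₁ i₂, cnt sh T' (false, a) x := by
  classical
  set c₀ : ℕ × ℕ := (i₁, LL T a b i₁) with hc₀
  have hcmem : T c₀ = some (false, a) ∨ T c₀ = some (true, b) := LL_mem hneTop
  have hkey := hts.2.2 c₀ hcmem
  -- identify the two sets with explicit finsets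
  have hFin : ∀ U : Filling n,
      ((Finset.Icc i₁ i₂).biUnion fun x =>
        ((Finset.range (sh.rowLen x)).filter fun j => U (x, j) = some (false, a)).image
          fun j => ((x, j) : ℕ × ℕ)).card
      = ∑ x ∈ Finset.Icc i₁ i₂, cnt sh U (false, a) x := by
    intro U
    rw [Finset.card_biUnion]
    · refine Finset.sum_congr rfl ?_
      intro x _
      rw [Finset.card_image_of_injective _ (fun j j' h => by injection h), cnt]
    · intro x _ y _ hxy
      rw [Function.onFun, Finset.disjoint_left]
      intro e he he'
      simp only [Finset.mem_image, Finset.mem_filter, Finset.mem_range] at he he'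
      obtain ⟨j, _, rfl⟩ := he
      obtain ⟨j', _, hj'⟩ := he'
      exact hxy (by injection hj'.symm)
  have hsetT : {d | ConnIn (Sset T a b) c₀ d ∧ T d = some (false, a)}
      = ↑((Finset.Icc i₁ i₂).biUnion fun x =>
        ((Finset.range (sh.rowLen x)).filter fun j => T (x, j) = some (false, a)).image
          fun j => ((x, j) : ℕ × ℕ)) := by
    ext d
    simp only [Set.mem_setOf_eq, Finset.coe_biUnion, Finset.mem_coe, Set.mem_iUnion,
      Finset.mem_image, Finset.mem_filter, Finset.mem_range]
    constructor
    · rintro ⟨hconn, hval⟩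
      have hprops := (conn_iff hr hc hT h12 hneTop hchain htop hbot d).1 hconn
      refine ⟨d.1, Finset.mem_Icc.2 ⟨hprops.2.1, hprops.2.2⟩, d.2, ⟨?_, ?_⟩, ?_⟩
      · exact (YoungDiagram.mem_iff_lt_rowLen).1 (mem_sh_of_eq hT (show T (d.1, d.2) = _ from hval))
      · exact hval
      · rfl
    · rintro ⟨x, hx, j, ⟨_, hval⟩, rfl⟩
      rw [Finset.mem_Icc] at hx
      refine ⟨(conn_iff hr hc hT h12 hneTop hchain htop hbot _).2
        ⟨Or.inl hval, hx.1, hx.2⟩, hval⟩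
  have hsetT' : {d | ConnIn (Sset T a b) c₀ d ∧ T' d = some (false, a)}
      = ↑((Finset.Icc i₁ i₂).biUnion fun x =>
        ((Finset.range (sh.rowLen x)).filter fun j => T' (x, j) = some (false, a)).image
          fun j => ((x, j) : ℕ × ℕ)) := by
    ext d
    simp only [Set.mem_setOf_eq, Finset.coe_biUnion, Finset.mem_coe, Set.mem_iUnion,
      Finset.mem_image, Finset.mem_filter, Finset.mem_range]
    constructor
    · rintro ⟨hconn, hval⟩
      have hprops := (conn_iff hr hc hT h12 hneTop hchain htop hbot d).1 hconn
      refine ⟨d.1, Finset.mem_Icc.2 ⟨hprops.2.1, hprops.2.2⟩, d.2, ⟨?_, ?_⟩, ?_⟩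
      · exact (YoungDiagram.mem_iff_lt_rowLen).1
          (mem_sh_of_eq hT' (show T' (d.1, d.2) = _ from hval))
      · exact hval
      · rfl
    · rintro ⟨x, hx, j, ⟨_, hval⟩, rfl⟩
      rw [Finset.mem_Icc] at hx
      have hS : isS T a b (x, j) := (hts.2.1 (x, j)).2 (Or.inl hval)
      refine ⟨(conn_iff hr hc hT h12 hneTop hchain htop hbot _).2
        ⟨hS, hx.1, hx.2⟩, hval⟩
  rw [show Sset T a b = {e | T e = some (false, a) ∨ T e = some (true, b)} from rfl] at hsetT hsetT'
  rw [hsetT, hsetT'] at hkey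
  rw [Set.ncard_coe_finset, Set.ncard_coe_finset] at hkey
  rw [← hFin T, ← hFin T']
  exact hkey

end ConvSwitch
namespace ConvSwitch

variable {n : ℕ} {r r' : Letter n → Letter n → Prop} {sh : YoungDiagram}
  {T T' : Filling n} {a b : Fin n}

lemma cnt_vb_one_succ (hr : IsLinExt r) (hc : CoveredBy r (false, a) (true, b))
    (hT : IsColoredTableau r sh T) {x : ℕ} (hl : linked T a b x) :
    cnt sh T (true, b) (x + 1) = 1 :=
  le_antisymm (cnt_vb_le_one hT _) (cnt_pos hT (linked_T_vb hr hc hT hl))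

lemma cnt'_vb_one (hr : IsLinExt r) (hc : CoveredBy r (false, a) (true, b))
    (hr' : IsLinExt r') (hc' : CoveredBy r' (true, b) (false, a))
    (hT : IsColoredTableau r sh T) (hT' : IsColoredTableau r' sh T')
    (hts : TableauSwitch a b T T') {x : ℕ} (hl : linked T a b x) :
    cnt sh T' (true, b) x = 1 :=
  le_antisymm (cnt_vb_le_one hT' _) (cnt_pos hT' (linked_T'_vb hr' hc' hr hc hT hT' hts hl))

lemma cnt_reconcile (hts : TableauSwitch a b T T') (x : ℕ) :
    cnt sh T (false, a) x + cnt sh T (true, b) x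
      = cnt sh T' (false, a) x + cnt sh T' (true, b) x := by
  rw [cnt_add_eq_lenS, cnt'_add_eq_lenS hts]

lemma block_vb (hr : IsLinExt r) (hc : CoveredBy r (false, a) (true, b))
    (hr' : IsLinExt r') (hc' : CoveredBy r' (true, b) (false, a))
    (hT : IsColoredTableau r sh T) (hT' : IsColoredTableau r' sh T')
    (hts : TableauSwitch a b T T') {i₁ i₂ : ℕ} (h12 : i₁ ≤ i₂)
    (hneTop : rowNE T a b i₁)
    (hchain : ∀ y, i₁ ≤ y → y < i₂ → linked T a b y)
    (htop : ∀ u, i₁ = u + 1 → ¬ linked T a b u) (hbot : ¬ linked T a b i₂) :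
    cnt sh T' (true, b) i₂ = cnt sh T (true, b) i₁ := by
  have hsum := block_sum hr hc hT hT' hts h12 hneTop hchain htop hbot
  have hsum2 : ∑ x ∈ Finset.Icc i₁ i₂, cnt sh T (true, b) x
      = ∑ x ∈ Finset.Icc i₁ i₂, cnt sh T' (true, b) x := by
    have h1 : ∑ x ∈ Finset.Icc i₁ i₂, (cnt sh T (false, a) x + cnt sh T (true, b) x)
        = ∑ x ∈ Finset.Icc i₁ i₂, (cnt sh T' (false, a) x + cnt sh T' (true, b) x) :=
      Finset.sum_congr rfl fun x _ => cnt_reconcile hts x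
    rw [Finset.sum_add_distrib, Finset.sum_add_distrib, hsum] at h1
    omega
  have hTsplit : ∑ x ∈ Finset.Icc i₁ i₂, cnt sh T (true, b) x
      = cnt sh T (true, b) i₁ + (i₂ - i₁) := by
    rw [Finset.Icc_eq_cons_Ioc h12, Finset.sum_cons]
    congr 1
    have : ∀ x ∈ Finset.Ioc i₁ i₂, cnt sh T (true, b) x = 1 := by
      intro x hx
      rw [Finset.mem_Ioc] at hx
      obtain ⟨u, rfl⟩ := Nat.exists_eq_add_of_lt hx.1
      have hl : linked T a b (i₁ + u) := by
        refine hchain _ (by omega) (by omega)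
      exact cnt_vb_one_succ hr hc hT hl
    rw [Finset.sum_congr rfl this, Finset.sum_const, Nat.card_Ioc, smul_eq_mul, mul_one]
  have hT'split : ∑ x ∈ Finset.Icc i₁ i₂, cnt sh T' (true, b) x
      = cnt sh T' (true, b) i₂ + (i₂ - i₁) := by
    rw [Finset.Icc_eq_cons_Ico h12, Finset.sum_cons]
    congr 1
    have : ∀ x ∈ Finset.Ico i₁ i₂, cnt sh T' (true, b) x = 1 := by
      intro x hx
      rw [Finset.mem_Ico] at hx
      exact cnt'_vb_one hr hc hr' hc' hT hT' hts (hchain x hx.1 hx.2)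
    rw [Finset.sum_congr rfl this, Finset.sum_const, Nat.card_Ico, smul_eq_mul, mul_one]
  omega

end ConvSwitch
namespace ConvSwitch

variable {n : ℕ} {r r' : Letter n → Letter n → Prop} {sh : YoungDiagram}
  {T T' : Filling n} {a b : Fin n}

lemma Pinv (hr : IsLinExt r) (hc : CoveredBy r (false, a) (true, b))
    (hr' : IsLinExt r') (hc' : CoveredBy r' (true, b) (false, a))
    (hT : IsColoredTableau r sh T) (hT' : IsColoredTableau r' sh T')
    (hts : TableauSwitch a b T T') :
    ∀ t, Fcnt sh T (false, a) t
      = Fcnt sh T' (false, a) t + (if OpenW sh T a b t then 1 else 0) := by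
  intro t
  induction t with
  | zero =>
    have hO : ¬ OpenW sh T a b 0 := by rintro ⟨i₁, h1, -⟩; omega
    simp [Fcnt, hO]
  | succ t ih =>
    have hstep : ∀ (U : Filling n), Fcnt sh U (false, a) (t + 1)
        = Fcnt sh U (false, a) t + cnt sh U (false, a) t :=
      fun U => Finset.sum_range_succ _ _
    by_cases hrow : rowNE T a b t
    · by_cases hOt : OpenW sh T a b t
      · rw [if_pos hOt] at ih
        obtain ⟨i₁, hi₁t, hi₁ne, hi₁vb, hi₁chain⟩ := hOt
        obtain ⟨u, rfl⟩ : ∃ u, t = u + 1 := ⟨t - 1, by omega⟩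
        have hlu : linked T a b u := hi₁chain u (by omega) (by omega)
        have hbt : cnt sh T (true, b) (u + 1) = 1 := cnt_vb_one_succ hr hc hT hlu
        by_cases hlt : linked T a b (u + 1)
        · have hO2 : OpenW sh T a b (u + 1 + 1) := by
            refine ⟨i₁, by omega, hi₁ne, hi₁vb, fun x hx hx' => ?_⟩
            rcases Nat.lt_or_ge x (u + 1) with h | h
            · exact hi₁chain x hx h
            · have hxe : x = u + 1 := by omega
              exact hxe ▸ hlt
          have hb' : cnt sh T' (true, b) (u + 1) = 1 :=
            cnt'_vb_one hr hc hr' hc' hT hT' hts hlt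
          have hrec := cnt_reconcile (sh := sh) hts (u + 1)
          rw [hstep, hstep, ih, if_pos hO2]
          omega
        · have htop : ∀ u', i₁ = u' + 1 → ¬ linked T a b u' := by
            intro u' he hlk
            have h1 := cnt_vb_one_succ hr hc hT hlk
            rw [← he] at h1
            omega
          have hbv := block_vb hr hc hr' hc' hT hT' hts (by omega : i₁ ≤ u + 1) hi₁ne
            (fun y hy hy' => hi₁chain y hy hy') htop hlt
          rw [hi₁vb] at hbv
          have hrec := cnt_reconcile (sh := sh) hts (u + 1)
          have hO2 : ¬ OpenW sh T a b (u + 1 + 1) := by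
            rintro ⟨i', h1, h2, h3, h4⟩
            exact hlt (h4 (u + 1) (by omega) (by omega))
          rw [hstep, hstep, ih, if_neg hO2]
          omega
      · rw [if_neg hOt] at ih
        classical
        have hPex : ∃ i, i ≤ t ∧ ∀ x, i ≤ x → x < t → linked T a b x :=
          ⟨t, le_refl t, fun x hx hx' => absurd (lt_of_le_of_lt hx hx') (lt_irrefl t)⟩
        set i₀ := Nat.find hPex with hi₀def
        have hwf := Nat.find_spec hPex
        have hmin : ∀ m, m < i₀ → ¬ (m ≤ t ∧ ∀ x, m ≤ x → x < t → linked T a b x) :=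
          fun m hm => Nat.find_min hPex hm
        have htop : ∀ u', i₀ = u' + 1 → ¬ linked T a b u' := by
          intro u' he hlk
          refine hmin u' (by omega) ⟨by omega, ?_⟩
          intro x hx hx'
          rcases Nat.eq_or_lt_of_le hx with h | h
          · exact h ▸ hlk
          · exact hwf.2 x (by omega) hx'
        have hneTop : rowNE T a b i₀ := by
          rcases Nat.eq_or_lt_of_le hwf.1 with h | h
          · have he : i₀ = t := h
            rw [he]
            exact hrow
          · exact (hwf.2 i₀ (le_refl _) h).1
        have hvb₀ : cnt sh T (true, b) i₀ = 1 ∨ i₀ = t := by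
          rcases Nat.eq_or_lt_of_le hwf.1 with h | h
          · exact Or.inr h
          · left
            by_contra hne0
            have hle1 := cnt_vb_le_one (sh := sh) (b := b) hT i₀
            exact hOt ⟨i₀, h, hneTop, by omega, hwf.2⟩
        by_cases hlt : linked T a b t
        · have hb' : cnt sh T' (true, b) t = 1 :=
            cnt'_vb_one hr hc hr' hc' hT hT' hts hlt
          have hrec := cnt_reconcile (sh := sh) hts t
          by_cases hi₀t : i₀ = t
          · by_cases hbt0 : cnt sh T (true, b) t = 0
            · have hO2 : OpenW sh T a b (t + 1) := by
                refine ⟨t, by omega, hrow, hbt0, fun x hx hx' => ?_⟩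
                have hxe : x = t := by omega
                exact hxe ▸ hlt
              rw [hstep, hstep, ih, if_pos hO2]
              omega
            · have hle1 := cnt_vb_le_one (sh := sh) (b := b) hT t
              have hO2 : ¬ OpenW sh T a b (t + 1) := by
                rintro ⟨i', h1, h2, h3, h4⟩
                rcases Nat.lt_or_ge i' t with h | h
                · refine hmin i' (by omega) ⟨by omega, fun x hx hx' => h4 x hx (by omega)⟩
                · have hie : i' = t := by omega
                  subst hie
                  exact hbt0 h3
              rw [hstep, hstep, ih, if_neg hO2]
              omega
          · have hi₀lt : i₀ < t := by omega
            have hbt : cnt sh T (true, b) t = 1 := by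
              obtain ⟨u, rfl⟩ : ∃ u, t = u + 1 := ⟨t - 1, by omega⟩
              exact cnt_vb_one_succ hr hc hT (hwf.2 u (by omega) (by omega))
            have hvb₀' : cnt sh T (true, b) i₀ = 1 := by
              rcases hvb₀ with h | h
              · exact h
              · exact absurd h hi₀t
            have hO2 : ¬ OpenW sh T a b (t + 1) := by
              rintro ⟨i', h1, h2, h3, h4⟩
              rcases Nat.lt_or_ge i' i₀ with h | h
              · exact hmin i' h ⟨by omega, fun x hx hx' => h4 x hx (by omega)⟩
              · rcases Nat.eq_or_lt_of_le h with h' | h'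
                · rw [h'] at hvb₀'
                  omega
                · by_cases hit : i' = t
                  · subst hit
                    omega
                  · obtain ⟨u', rfl⟩ : ∃ u', i' = u' + 1 := ⟨i' - 1, by omega⟩
                    have := cnt_vb_one_succ hr hc hT (hwf.2 u' (by omega) (by omega))
                    omega
            rw [hstep, hstep, ih, if_neg hO2]
            omega
        · have hbv := block_vb hr hc hr' hc' hT hT' hts hwf.1 hneTop hwf.2 htop hlt
          rw [← hi₀def] at hbv
          have hrec := cnt_reconcile (sh := sh) hts t
          have hO2 : ¬ OpenW sh T a b (t + 1) := by
            rintro ⟨i', h1, h2, h3, h4⟩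
            exact hlt (h4 t (by omega) (by omega))
          by_cases hi₀t : i₀ = t
          · rw [hi₀t] at hbv
            rw [hstep, hstep, ih, if_neg hO2]
            omega
          · have hvb₀' : cnt sh T (true, b) i₀ = 1 := by
              rcases hvb₀ with h | h
              · exact h
              · exact absurd h hi₀t
            have hbt : cnt sh T (true, b) t = 1 := by
              obtain ⟨u, rfl⟩ : ∃ u, t = u + 1 := ⟨t - 1, by omega⟩
              exact cnt_vb_one_succ hr hc hT (hwf.2 u (by omega) (by omega))
            rw [hstep, hstep, ih, if_neg hO2]
            omega
    · have hc0 := cnt_zero_of_empty (sh := sh) hT hrow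
      have hc0' := cnt'_zero_of_empty (sh := sh) hts hrow
      have hOt : ¬ OpenW sh T a b t := by
        rintro ⟨i', h1, h2, h3, h4⟩
        obtain ⟨u, rfl⟩ : ∃ u, t = u + 1 := ⟨t - 1, by omega⟩
        exact hrow (h4 u (by omega) (by omega)).2.1
      have hO2 : ¬ OpenW sh T a b (t + 1) := by
        rintro ⟨i', h1, h2, h3, h4⟩
        exact hrow (h4 t (by omega) (by omega)).1
      rw [hstep, hstep, ih, if_neg hOt, if_neg hO2]
      omega

end ConvSwitch
namespace ConvSwitch

variable {n : ℕ} {r r' : Letter n → Letter n → Prop} {sh : YoungDiagram}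
  {T T' : Filling n} {a b : Fin n}

lemma Fcnt_succ (U : Filling n) (v : Letter n) (k : ℕ) :
    Fcnt sh U v (k + 1) = Fcnt sh U v k + cnt sh U v k := Finset.sum_range_succ _ _

lemma rowNE_lt_colLen (hT : IsColoredTableau r sh T) {x : ℕ} (hne : rowNE T a b x) :
    x < sh.colLen 0 := by
  obtain ⟨j, hj⟩ := hne
  have h0 : (x, 0) ∈ sh := sh.up_left_mem (le_refl x) (Nat.zero_le j) (isS_mem hT hj)
  exact (YoungDiagram.mem_iff_lt_colLen).1 h0

/-- Direction 1 : pair `(a, a+1)`. -/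
lemma D1 (hr : IsLinExt r) (hc : CoveredBy r (false, a) (true, b))
    (hut : UnbarredTight r) (hr' : IsLinExt r') (hc' : CoveredBy r' (true, b) (false, a))
    (hT : IsColoredTableau r sh T) (hT' : IsColoredTableau r' sh T')
    (hts : TableauSwitch a b T T') (h : a.val + 1 < n)
    (hballot : ∀ t, Fcnt sh T (false, ⟨a.val + 1, h⟩) (t + 1) ≤ Fcnt sh T (false, a) t) :
    ∀ t, Fcnt sh T (false, ⟨a.val + 1, h⟩) (t + 1) ≤ Fcnt sh T' (false, a) t := by
  intro t
  have hP := Pinv hr hc hr' hc' hT hT' hts t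
  by_cases hO : OpenW sh T a b t
  · rw [if_pos hO] at hP
    obtain ⟨i₁, hi₁t, hi₁ne, hi₁vb, hi₁chain⟩ := hO
    have SEC : ∀ s, i₁ + 1 ≤ s → (∀ x, i₁ ≤ x → x < s → linked T a b x) →
        Fcnt sh T (false, ⟨a.val + 1, h⟩) (s + 1) + 1 ≤ Fcnt sh T (false, a) s := by
      intro s hs
      induction s, hs using Nat.le_induction with
      | base =>
        intro hch
        have hl : linked T a b i₁ := hch i₁ (le_refl _) (by omega)
        have hcb := cnt_succ_bound hr hc hut hT h hl.1 hl.2.1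
        have hLR := linked_LL_eq_RR hr hc hT hl
        have hlen := lenS_lower hr hc hT hl.1
        have hpart := cnt_add_eq_lenS (sh := sh) (T := T) (a := a) (b := b) i₁
        have hb := hballot i₁
        have e1 := Fcnt_succ (sh := sh) T (false, ⟨a.val + 1, h⟩) (i₁ + 1)
        have e2 := Fcnt_succ (sh := sh) T (false, a) i₁
        omega
      | succ s hs ih =>
        intro hch
        have ih' := ih (fun x hx hx' => hch x hx (by omega))
        have hls : linked T a b s := hch s (by omega) (by omega)
        have hbs : cnt sh T (true, b) s = 1 := by
          obtain ⟨u, rfl⟩ : ∃ u, s = u + 1 := ⟨s - 1, by omega⟩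
          exact cnt_vb_one_succ hr hc hT (hch u (by omega) (by omega))
        have hcb := cnt_succ_bound hr hc hut hT h hls.1 hls.2.1
        have hLR := linked_LL_eq_RR hr hc hT hls
        have hlen := lenS_lower hr hc hT hls.1
        have hpart := cnt_add_eq_lenS (sh := sh) (T := T) (a := a) (b := b) s
        have e1 := Fcnt_succ (sh := sh) T (false, ⟨a.val + 1, h⟩) (s + 1)
        have e2 := Fcnt_succ (sh := sh) T (false, a) s
        omega
    have hSEC := SEC t (by omega) (fun x hx hx' => hi₁chain x hx hx')
    omega
  · rw [if_neg hO] at hP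
    have := hballot t
    omega

/-- Direction 2 : pair `(a-1, a)`. -/
lemma D2 (hr : IsLinExt r) (hc : CoveredBy r (false, a) (true, b))
    (hr' : IsLinExt r') (hc' : CoveredBy r' (true, b) (false, a))
    (hut' : UnbarredTight r') (hT : IsColoredTableau r sh T)
    (hT' : IsColoredTableau r' sh T') (hts : TableauSwitch a b T T')
    (h0 : 0 < a.val) (hlt : a.val - 1 < n)
    (hballot' : ∀ t, Fcnt sh T' (false, a) (t + 1)
      ≤ Fcnt sh T' (false, ⟨a.val - 1, hlt⟩) t) :
    ∀ t, Fcnt sh T (false, a) (t + 1) ≤ Fcnt sh T (false, ⟨a.val - 1, hlt⟩) t := by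
  intro t
  have hPne : (⟨a.val - 1, hlt⟩ : Fin n) ≠ a := by
    intro he
    have := congrArg Fin.val he
    simp at this
    omega
  have htrans := Fcnt_eq_of_ne (sh := sh) hts hPne t
  have hP := Pinv hr hc hr' hc' hT hT' hts (t + 1)
  by_cases hO : OpenW sh T a b (t + 1)
  · rw [if_pos hO] at hP
    obtain ⟨i₁, hi₁t, hi₁ne, hi₁vb, hi₁chain⟩ := hO
    have hltt : linked T a b t := hi₁chain t (by omega) (by omega)
    classical
    have hQex : ∃ k, ¬ linked T a b (t + k) := by
      refine ⟨sh.colLen 0, fun hl => ?_⟩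
      have := rowNE_lt_colLen hT hl.1
      omega
    set k₀ := Nat.find hQex with hk₀def
    have hbot : ¬ linked T a b (t + k₀) := Nat.find_spec hQex
    have hmid : ∀ x, t ≤ x → x < t + k₀ → linked T a b x := by
      intro x hx hx'
      have hmin := Nat.find_min hQex (m := x - t) (by omega)
      rw [not_not] at hmin
      have hxe : t + (x - t) = x := by omega
      rwa [hxe] at hmin
    have hk₀pos : 1 ≤ k₀ := by
      by_contra hk
      have hke : k₀ = 0 := by omega
      rw [hke] at hbot
      exact hbot hltt
    have hchain2 : ∀ x, i₁ ≤ x → x < t + k₀ → linked T a b x := by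
      intro x hx hx'
      rcases Nat.lt_or_ge x (t + 1) with hcase | hcase
      · exact hi₁chain x hx hcase
      · exact hmid x (by omega) hx'
    have htop : ∀ u', i₁ = u' + 1 → ¬ linked T a b u' := by
      intro u' he hlk
      have h1 := cnt_vb_one_succ hr hc hT hlk
      rw [← he] at h1
      omega
    have hbv := block_vb hr hc hr' hc' hT hT' hts (by omega : i₁ ≤ t + k₀) hi₁ne
      hchain2 htop hbot
    rw [hi₁vb] at hbv
    have DOWN : ∀ j, j ≤ k₀ → Fcnt sh T' (false, a) (t + k₀ - j + 1) + 1
        ≤ Fcnt sh T' (false, ⟨a.val - 1, hlt⟩) (t + k₀ - j) + (if j = 0 then 1 else 0) := by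
      intro j
      induction j with
      | zero =>
        intro _
        rw [if_pos rfl]
        have := hballot' (t + k₀)
        have he : t + k₀ - 0 = t + k₀ := rfl
        rw [he]
        omega
      | succ j ih =>
        intro hj1
        have ihj := ih (by omega)
        set s := t + k₀ - (j + 1) with hsdef
        have hs1 : t + k₀ - j = s + 1 := by omega
        rw [hs1] at ihj
        rw [if_neg (by omega : ¬ (j + 1 = 0))]
        have hls : linked T a b s := hmid s (by omega) (by omega)
        have hpred := cnt_pred_bound hr hc hr' hc' hut' hT hT' hts h0 hlt hls
        have hlen := lenS_lower hr hc hT hls.2.1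
        have hpart := cnt'_add_eq_lenS (sh := sh) hts (s + 1)
        have e1 := Fcnt_succ (sh := sh) T' (false, a) (s + 1)
        have e2 := Fcnt_succ (sh := sh) T' (false, ⟨a.val - 1, hlt⟩) s
        by_cases hj0 : j = 0
        · rw [if_pos hj0] at ihj
          have hse : s + 1 = t + k₀ := by omega
          have hvb0 : cnt sh T' (true, b) (s + 1) = 0 := by rw [hse]; exact hbv
          omega
        · rw [if_neg hj0] at ihj
          have hls1 : linked T a b (s + 1) := hmid (s + 1) (by omega) (by omega)
          have hvb1 : cnt sh T' (true, b) (s + 1) = 1 :=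
            cnt'_vb_one hr hc hr' hc' hT hT' hts hls1
          omega
    have hfin := DOWN k₀ (le_refl _)
    have he : t + k₀ - k₀ = t := by omega
    rw [he, if_neg (by omega : ¬ (k₀ = 0))] at hfin
    omega
  · rw [if_neg hO] at hP
    have := hballot' t
    omega

end ConvSwitch
namespace ConvSwitch

variable {n : ℕ} {r r' : Letter n → Letter n → Prop} {sh : YoungDiagram}
  {T T' : Filling n} {a b : Fin n}

/-- the row-prefix ballot criterion -/
def Crit (sh : YoungDiagram) (U : Filling n) : Prop :=
  ∀ (i : ℕ) (h : i + 1 < n) (t : ℕ),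
    Fcnt sh U (false, ⟨i + 1, h⟩) (t + 1) ≤ Fcnt sh U (false, ⟨i, Nat.lt_of_succ_lt h⟩) t

lemma Fcnt_le_of_Pinv (hr : IsLinExt r) (hc : CoveredBy r (false, a) (true, b))
    (hr' : IsLinExt r') (hc' : CoveredBy r' (true, b) (false, a))
    (hT : IsColoredTableau r sh T) (hT' : IsColoredTableau r' sh T')
    (hts : TableauSwitch a b T T') (t : ℕ) :
    Fcnt sh T' (false, a) t ≤ Fcnt sh T (false, a) t := by
  have := Pinv hr hc hr' hc' hT hT' hts t
  split_ifs at this <;> omega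

lemma crit_iff (hr : IsLinExt r) (hc : CoveredBy r (false, a) (true, b))
    (hut : UnbarredTight r) (hr' : IsLinExt r') (hc' : CoveredBy r' (true, b) (false, a))
    (hut' : UnbarredTight r') (hT : IsColoredTableau r sh T)
    (hT' : IsColoredTableau r' sh T') (hts : TableauSwitch a b T T') :
    Crit sh T ↔ Crit sh T' := by
  have hA'le := Fcnt_le_of_Pinv hr hc hr' hc' hT hT' hts
  constructor
  · intro hcrit i h t
    by_cases hia : i = a.val
    · subst hia
      have hlow : (⟨a.val, Nat.lt_of_succ_lt h⟩ : Fin n) = a := Fin.eta a _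
      have hup : (⟨a.val + 1, h⟩ : Fin n) ≠ a := by
        intro he
        have := congrArg Fin.val he
        simp at this
      rw [hlow, ← Fcnt_eq_of_ne hts hup]
      refine D1 hr hc hut hr' hc' hT hT' hts h (fun t' => ?_) t
      have := hcrit a.val h t'
      rwa [hlow] at this
    · by_cases hia1 : i + 1 = a.val
      · have hup : (⟨i + 1, h⟩ : Fin n) = a := Fin.ext hia1
        have hlowne : (⟨i, Nat.lt_of_succ_lt h⟩ : Fin n) ≠ a := by
          intro he
          have := congrArg Fin.val he
          simp at this
          omega
        rw [hup, ← Fcnt_eq_of_ne hts hlowne]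
        calc Fcnt sh T' (false, a) (t + 1) ≤ Fcnt sh T (false, a) (t + 1) := hA'le (t + 1)
          _ ≤ Fcnt sh T (false, ⟨i, Nat.lt_of_succ_lt h⟩) t := by
              have := hcrit i h t
              rwa [hup] at this
      · have h1 : (⟨i + 1, h⟩ : Fin n) ≠ a := by
          intro he
          exact hia1 (by simpa using congrArg Fin.val he)
        have h2 : (⟨i, Nat.lt_of_succ_lt h⟩ : Fin n) ≠ a := by
          intro he
          exact hia (by simpa using congrArg Fin.val he)
        rw [← Fcnt_eq_of_ne hts h1, ← Fcnt_eq_of_ne hts h2]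
        exact hcrit i h t
  · intro hcrit i h t
    by_cases hia : i = a.val
    · subst hia
      have hlow : (⟨a.val, Nat.lt_of_succ_lt h⟩ : Fin n) = a := Fin.eta a _
      have hup : (⟨a.val + 1, h⟩ : Fin n) ≠ a := by
        intro he
        have := congrArg Fin.val he
        simp at this
      rw [hlow, Fcnt_eq_of_ne hts hup]
      calc Fcnt sh T' (false, ⟨a.val + 1, h⟩) (t + 1)
          ≤ Fcnt sh T' (false, a) t := by
            have := hcrit a.val h t
            rwa [hlow] at this
        _ ≤ Fcnt sh T (false, a) t := hA'le t
    · by_cases hia1 : i + 1 = a.val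
      · have hup : (⟨i + 1, h⟩ : Fin n) = a := Fin.ext hia1
        have h0 : 0 < a.val := by omega
        have hlt : a.val - 1 < n := by omega
        have hloweq : (⟨i, Nat.lt_of_succ_lt h⟩ : Fin n) = ⟨a.val - 1, hlt⟩ :=
          Fin.ext (by simp; omega)
        rw [hup, hloweq]
        refine D2 hr hc hr' hc' hut' hT hT' hts h0 hlt (fun t' => ?_) t
        have := hcrit i h t'
        rwa [hup, hloweq] at this
      · have h1 : (⟨i + 1, h⟩ : Fin n) ≠ a := by
          intro he
          exact hia1 (by simpa using congrArg Fin.val he)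
        have h2 : (⟨i, Nat.lt_of_succ_lt h⟩ : Fin n) ≠ a := by
          intro he
          exact hia (by simpa using congrArg Fin.val he)
        rw [Fcnt_eq_of_ne hts h1, Fcnt_eq_of_ne hts h2]
        exact hcrit i h t

end ConvSwitch
namespace ConvSwitch

variable {n : ℕ} {r : Letter n → Letter n → Prop} {sh : YoungDiagram}
  {T : Filling n}

/-- The row word: one row's contribution to `uWord`. -/
def rword (sh : YoungDiagram) (T : Filling n) (x : ℕ) : List (Fin n) :=
  (List.range (sh.rowLen x)).reverse.filterMap fun j =>
    match T (x, j) with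
    | some (false, c) => some c
    | _ => none

lemma uWord_eq (sh : YoungDiagram) (T : Filling n) :
    uWord sh T = (List.range (sh.colLen 0)).flatMap (rword sh T) := rfl

lemma count_filterMap {α β : Type*} [DecidableEq β] (g : α → Option β) (l : List α)
    (z : β) : (l.filterMap g).count z = l.countP (fun x => g x = some z) := by
  induction l with
  | nil => rfl
  | cons hd tl ih =>
    rw [List.filterMap_cons, List.countP_cons]
    cases hg : g hd with
    | none => simp [hg, ih]
    | some w =>
      rw [List.count_cons, ih]
      simp only [hg, Option.some.injEq]
      by_cases hw : w = z
      · simp [hw]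
      · simp [hw, Ne.symm hw]

lemma countP_range_card (L : ℕ) (p : ℕ → Bool) :
    (List.range L).countP p = ((Finset.range L).filter (fun j => p j = true)).card := by
  induction L with
  | zero => simp
  | succ L ih =>
    rw [List.range_succ, List.countP_append, Finset.range_add_one, Finset.filter_insert]
    by_cases hp : p L = true
    · rw [if_pos hp, Finset.card_insert_of_notMem (by simp)]
      simp [hp, ih]
    · rw [if_neg hp]
      simp [hp, ih]

lemma count_rword (x : ℕ) (z : Fin n) :
    (rword sh T x).count z = cnt sh T (false, z) x := by
  classical
  rw [rword, count_filterMap, List.countP_reverse, cnt]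
  rw [countP_range_card]
  congr 1
  refine Finset.filter_congr ?_
  intro j _
  simp only [decide_eq_true_eq]
  cases hv : T (x, j) with
  | none => simp
  | some v =>
    obtain ⟨bb, c⟩ := v
    cases bb
    · simp only []
      constructor
      · intro hh
        have : c = z := by simpa using hh
        rw [this]
      · intro hh
        have : c = z := by
          have := Option.some.inj hh
          simpa using this
        simpa using this
    · simp

lemma rword_sorted (hr : IsLinExt r) (hT : IsColoredTableau r sh T) (x : ℕ) :
    (rword sh T x).Pairwise (fun p q : Fin n => q ≤ p) := by
  rw [rword, List.filterMap_reverse, List.pairwise_reverse, List.pairwise_filterMap]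
  refine List.Pairwise.imp_of_mem ?_ List.pairwise_lt_range
  intro j j' hj hj' hlt z hz z' hz'
  -- z from column j, z' from column j', j < j' ⇒ z ≤ z'
  have hzv : T (x, j) = some (false, z) := by
    cases hv : T (x, j) with
    | none => rw [hv] at hz; simp at hz
    | some v =>
      obtain ⟨bb, c⟩ := v
      cases bb
      · rw [hv] at hz
        simp only [Option.mem_def, Option.some.injEq] at hz
        rw [hz]
      · rw [hv] at hz; simp at hz
  have hzv' : T (x, j') = some (false, z') := by
    cases hv : T (x, j') with
    | none => rw [hv] at hz'; simp at hz'
    | some v =>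
      obtain ⟨bb, c⟩ := v
      cases bb
      · rw [hv] at hz'
        simp only [Option.mem_def, Option.some.injEq] at hz'
        rw [hz']
      · rw [hv] at hz'; simp at hz'
  exact (unb_le hr).1 (hT.2.1 x j j' _ _ (le_of_lt hlt) hzv hzv')

lemma prefix_split {α : Type*} {p A B : List α} (h : p <+: A ++ B) :
    p <+: A ∨ ∃ q, q <+: B ∧ p = A ++ q := by
  have hA : A <+: A ++ B := ⟨B, rfl⟩
  rcases List.prefix_or_prefix_of_prefix h hA with h1 | h1
  · exact Or.inl h1
  · right
    obtain ⟨q, rfl⟩ := h1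
    obtain ⟨s, hs⟩ := h
    rw [List.append_assoc] at hs
    exact ⟨q, ⟨s, List.append_cancel_left hs⟩, rfl⟩

lemma prefix_flatMap {α β : Type*} (f : α → List β) :
    ∀ (L : List α) (p : List β), p <+: L.flatMap f →
      ∃ L₁ L₂, L = L₁ ++ L₂ ∧ ∃ q, p = L₁.flatMap f ++ q ∧
        (q = [] ∨ ∃ x L₂', L₂ = x :: L₂' ∧ q <+: f x) := by
  intro L
  induction L with
  | nil =>
    intro p hp
    rw [List.flatMap_nil] at hp
    exact ⟨[], [], rfl, p, by simp [List.prefix_nil.1 hp], Or.inl (List.prefix_nil.1 hp)⟩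
  | cons x xs ih =>
    intro p hp
    rw [List.flatMap_cons] at hp
    rcases prefix_split hp with h | ⟨q, hq, rfl⟩
    · exact ⟨[], x :: xs, rfl, p, by simp, Or.inr ⟨x, xs, rfl, h⟩⟩
    · obtain ⟨L₁, L₂, rfl, q', hq', hrest⟩ := ih q hq
      refine ⟨x :: L₁, L₂, rfl, q', ?_, hrest⟩
      rw [List.flatMap_cons, hq', List.append_assoc]

lemma count_flatMap_range (w : ℕ → List (Fin n)) (k : ℕ) (z : Fin n) :
    ((List.range k).flatMap w).count z = ∑ x ∈ Finset.range k, (w x).count z := by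
  induction k with
  | zero => simp
  | succ k ih =>
    rw [List.range_succ, List.flatMap_append, List.count_append, ih,
      Finset.sum_range_succ, List.flatMap_cons, List.flatMap_nil, List.append_nil]

end ConvSwitch
namespace ConvSwitch

variable {n : ℕ} {r : Letter n → Letter n → Prop} {sh : YoungDiagram}
  {T : Filling n}

lemma cnt_zero_of_ge (hT : IsColoredTableau r sh T) {x : ℕ} (hx : sh.colLen 0 ≤ x)
    (v : Letter n) : cnt sh T v x = 0 := by
  have hzero : sh.rowLen x = 0 := by
    by_contra hne
    have h1 : (x, 0) ∈ sh := (YoungDiagram.mem_iff_lt_rowLen).2 (Nat.pos_of_ne_zero hne)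
    have h2 := (YoungDiagram.mem_iff_lt_colLen).1 h1
    omega
  rw [cnt, hzero]
  simp

lemma dropWhile_head_false {α : Type*} (pf : α → Bool) :
    ∀ (l : List α) {c : α} {cs : List α}, l.dropWhile pf = c :: cs → pf c = false := by
  intro l
  induction l with
  | nil => intro c cs hh; simp at hh
  | cons a l ih =>
    intro c cs hh
    rw [List.dropWhile_cons] at hh
    by_cases ha : pf a = true
    · rw [if_pos ha] at hh
      exact ih hh
    · rw [if_neg ha] at hh
      injection hh with h1 h2
      rw [← h1]
      simpa using ha

lemma ballot_of_crit (hcrit : Crit sh T) : IsBallot (uWord sh T) := by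
  intro p hp i h
  rw [uWord_eq] at hp
  obtain ⟨L₁, L₂, hL, q, rfl, hrest⟩ := prefix_flatMap (rword sh T) _ p hp
  set tt := L₁.length with htt
  have hpre : L₁ <+: List.range (sh.colLen 0) := ⟨L₂, hL.symm⟩
  have httle : tt ≤ sh.colLen 0 := by
    have := hpre.length_le
    simpa using this
  have hL₁ : L₁ = List.range tt := by
    have h1 := List.prefix_iff_eq_take.1 hpre
    rw [List.take_range] at h1
    rw [h1]
    congr 1
    omega
  have hcq : ∀ z : Fin n, q.count z ≤ cnt sh T (false, z) tt := by
    intro z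
    rcases hrest with rfl | ⟨x, L₂', hL₂, hqpre⟩
    · simp
    · have hx : x = tt := by
        rw [hL₂] at hL
        have hlen := congrArg List.length hL
        simp [hL₁] at hlen
        have hget := congrArg (fun l : List ℕ => l[tt]?) hL
        simp only [hL₁] at hget
        rw [List.getElem?_range (by omega), List.getElem?_append_right (by simp)] at hget
        simp at hget
        omega
      subst hx
      calc q.count z ≤ (rword sh T tt).count z := hqpre.sublist.count_le z
        _ = cnt sh T (false, z) tt := count_rword tt z
  have hflat : ∀ z : Fin n, (L₁.flatMap (rword sh T)).count z = Fcnt sh T (false, z) tt := by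
    intro z
    rw [hL₁, count_flatMap_range, Fcnt]
    exact Finset.sum_congr rfl fun x _ => count_rword x z
  rw [List.count_append, List.count_append, hflat, hflat]
  have h1 := hcq ⟨i + 1, h⟩
  have h2 := hcrit i h tt
  have h3 := Fcnt_succ (sh := sh) T (false, ⟨i + 1, h⟩) tt
  omega

lemma crit_of_ballot (hr : IsLinExt r) (hT : IsColoredTableau r sh T)
    (hb : IsBallot (uWord sh T)) : Crit sh T := by
  intro i h t
  set RN := sh.colLen 0 with hRN
  have main : ∀ t', t' < RN → Fcnt sh T (false, ⟨i + 1, h⟩) (t' + 1)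
      ≤ Fcnt sh T (false, ⟨i, Nat.lt_of_succ_lt h⟩) t' := by
    intro t' ht'
    set pw : Fin n → Bool := fun z => decide (i + 1 ≤ z.val) with hpw
    set q := (rword sh T t').takeWhile pw with hq
    set p := (List.range t').flatMap (rword sh T) ++ q with hp
    have hpre : p <+: uWord sh T := by
      rw [uWord_eq]
      have hsplit : List.range RN
          = List.range t' ++ (t' :: List.drop (t' + 1) (List.range RN)) := by
        have h1 := List.take_append_drop t' (List.range RN)
        rw [List.take_range] at h1
        have h2 : min t' RN = t' := by omega
        rw [h2] at h1
        have h3 : List.drop t' (List.range RN) = t' :: List.drop (t' + 1) (List.range RN) := by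
          rw [List.drop_eq_getElem_cons (by simpa using ht'), List.getElem_range]
        conv_lhs => rw [← h1]
        rw [h3]
      rw [hsplit, List.flatMap_append, List.flatMap_cons]
      obtain ⟨s, hs⟩ := List.takeWhile_prefix (l := rword sh T t') pw
      refine ⟨s ++ (List.drop (t' + 1) (List.range RN)).flatMap (rword sh T), ?_⟩
      rw [hp, List.append_assoc, ← List.append_assoc q s, hs]
    have hcount : ∀ z : Fin n, p.count z = Fcnt sh T (false, z) t' + q.count z := by
      intro z
      rw [hp, List.count_append, count_flatMap_range, Fcnt]
      congr 1
      exact Finset.sum_congr rfl fun x _ => count_rword x z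
    have hsort := rword_sorted hr hT t'
    have hq1 : q.count ⟨i + 1, h⟩ = cnt sh T (false, ⟨i + 1, h⟩) t' := by
      rw [← count_rword t' (⟨i + 1, h⟩ : Fin n)]
      conv_rhs => rw [← List.takeWhile_append_dropWhile (p := pw) (l := rword sh T t')]
      rw [List.count_append, ← hq]
      suffices hzero : (List.dropWhile pw (rword sh T t')).count ⟨i + 1, h⟩ = 0 by omega
      cases hd : List.dropWhile pw (rword sh T t') with
      | nil => simp
      | cons hd0 tl =>
        rw [List.count_eq_zero]
        have hfail := dropWhile_head_false pw _ hd
        intro hmem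
        rcases List.mem_cons.1 hmem with he | hm
        · rw [← he] at hfail
          simp [hpw] at hfail
        · have hsub : (hd0 :: tl).Sublist (rword sh T t') := hd ▸ List.dropWhile_sublist pw
          have hpair : (hd0 :: tl).Pairwise (fun p q : Fin n => q ≤ p) :=
            hsort.sublist hsub
          have hle := List.rel_of_pairwise_cons hpair hm
          rw [Fin.le_def] at hle
          simp only [hpw, decide_eq_false_iff_not] at hfail
          simp only [Fin.val_mk] at hle
          omega
    have hq2 : q.count ⟨i, Nat.lt_of_succ_lt h⟩ = 0 := by
      rw [List.count_eq_zero]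
      intro hmem
      have := List.mem_takeWhile_imp (hq ▸ hmem)
      simp only [hpw, decide_eq_true_eq, Fin.val_mk] at this
      omega
    have hball := hb p hpre i h
    rw [hcount, hcount, hq1, hq2] at hball
    rw [Fcnt_succ]
    omega
  rcases Nat.lt_or_ge t RN with hcase | hcase
  · exact main t hcase
  · by_cases hRN0 : RN = 0
    · have hz : Fcnt sh T (false, ⟨i + 1, h⟩) (t + 1) = 0 :=
        Finset.sum_eq_zero fun x _ => cnt_zero_of_ge hT (by omega) _
      omega
    · have h1 := main (RN - 1) (by omega)
      have e1 : Fcnt sh T (false, ⟨i + 1, h⟩) (t + 1)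
          = Fcnt sh T (false, ⟨i + 1, h⟩) (RN - 1 + 1) := by
        rw [Fcnt, Fcnt]
        refine (Finset.sum_subset (Finset.range_subset_range.2 (by omega : RN - 1 + 1 ≤ t + 1))
          ?_).symm
        intro x _ hnx
        rw [Finset.mem_range] at hnx
        exact cnt_zero_of_ge hT (by omega) _
      have e2 : Fcnt sh T (false, ⟨i, Nat.lt_of_succ_lt h⟩) (RN - 1)
          ≤ Fcnt sh T (false, ⟨i, Nat.lt_of_succ_lt h⟩) t :=
        Finset.sum_le_sum_of_subset (Finset.range_subset_range.2 (by omega))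
      omega

end ConvSwitch
/-- If `<` and `≺` are unbarred-tight total orders and `T`, `T'` are colored
tableaux related by a single conversion switch, then `u(T)` is a ballot sequence iff `u(T')`
is. -/
theorem uWord_ballot_iff_of_single_switch {n : ℕ} (r r' : Letter n → Letter n → Prop)
    (hr : IsLinExt r) (hr' : IsLinExt r')
    (hut : UnbarredTight r) (hut' : UnbarredTight r')
    (sh : YoungDiagram) (T T' : Filling n)
    (hT : IsColoredTableau r sh T) (hT' : IsColoredTableau r' sh T')
    (a b : Fin n) (hsw : OrderSwitch r r' a b) (hts : TableauSwitch a b T T') :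
    IsBallot (uWord sh T) ↔ IsBallot (uWord sh T') := by
  obtain ⟨hcov, hcov', hagree⟩ := hsw
  constructor
  · intro hb
    exact ConvSwitch.ballot_of_crit
      ((ConvSwitch.crit_iff hr hcov hut hr' hcov' hut' hT hT' hts).1
        (ConvSwitch.crit_of_ballot hr hT hb))
  · intro hb
    exact ConvSwitch.ballot_of_crit
      ((ConvSwitch.crit_iff hr hcov hut hr' hcov' hut' hT hT' hts).2
        (ConvSwitch.crit_of_ballot hr' hT' hb))
end
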